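/- arXiv:1210.1058 — 10 statements merged into one kernel-verified Lean document; each statement's English description precedes it below -/
import Mathlib

section
/- Let Ψ_0,...,Ψ_{k-1} be a Chebyshev system on [A,B], and let A ≤ z_1 < ... < z_{k+1} ≤ B and coefficients r_1,...,r_{k+1} satisfy ∑_{i=1}^{k+1} r_i Ψ_l(z_i) = 0 for l = 0,...,k-1. If some r_i is nonzero, then all r_i are nonzero; moreover, all r_i with odd index i have the same sign, which is opposite to the common sign of the r_i with even index i. -/
/-- A Chebyshev system on `[A,B]`: the determinant of the matrix of values at any
strictly increasing tuple of points of `[A,B]` is strictly positive. -/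
def ChebyshevSystem (A B : ℝ) {m : ℕ} (u : Fin m → ℝ → ℝ) : Prop :=
  ∀ z : Fin m → ℝ, StrictMono z → (∀ i, z i ∈ Set.Icc A B) →
    0 < (Matrix.of fun i j => u i (z j)).det

/-- Here `i : Fin (k+1)` corresponds to the paper's index `i+1`, so the paper's
odd indices are the `i` with even `i.val`. -/
theorem stmt_1 (A B : ℝ) (k : ℕ) (Ψ : Fin k → ℝ → ℝ)
    (hcont : ∀ i, ContinuousOn (Ψ i) (Set.Icc A B))
    (hcheb : ChebyshevSystem A B Ψ)
    (z : Fin (k + 1) → ℝ) (hz : StrictMono z)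
    (hzmem : ∀ i, z i ∈ Set.Icc A B) (r : Fin (k + 1) → ℝ)
    (heq : ∀ l : Fin k, ∑ i, r i * Ψ l (z i) = 0)
    (hne : ∃ i, r i ≠ 0) :
    (∀ i, r i ≠ 0) ∧
      ∃ s : ℝ, (s = 1 ∨ s = -1) ∧
        ∀ i : Fin (k + 1),
          (Even (i : ℕ) → 0 < s * r i) ∧ (Odd (i : ℕ) → s * r i < 0) := by
  classical
  set M : Matrix (Fin k) (Fin (k + 1)) ℝ := Matrix.of fun l i => Ψ l (z i) with hM
  set D : Fin (k + 1) → ℝ := fun j => (M.submatrix id j.succAbove).det with hDdef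
  have hDpos : ∀ j, 0 < D j := by
    intro j
    have h := hcheb (z ∘ j.succAbove) (hz.comp (Fin.strictMono_succAbove j))
      (fun i => hzmem _)
    convert h using 1
    rfl
  set N : Matrix (Fin (k + 1)) (Fin (k + 1)) ℝ :=
    Matrix.of (Fin.cons r (fun l j => Ψ l (z j))) with hN
  have hmul : N.mulVec r = Pi.single (0 : Fin (k + 1)) (∑ q, r q * r q) := by
    funext i
    induction i using Fin.cases with
    | zero => simp [Matrix.mulVec, dotProduct, hN]
    | succ l =>
      have h0 : ∑ p, r p * Ψ l (z p) = 0 := heq l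
      have : ∑ p, Ψ l (z p) * r p = 0 := by
        rw [← h0]; exact Finset.sum_congr rfl fun p _ => mul_comm _ _
      simp [Matrix.mulVec, dotProduct, hN, Pi.single_eq_of_ne (Fin.succ_ne_zero l),
        this]
  have hadj : ∀ p, N.adjugate p 0 = (-1 : ℝ) ^ (p : ℕ) * D p := by
    intro p
    rw [Matrix.adjugate_apply]
    have hupd : N.updateRow 0 (Pi.single p 1) =
        Matrix.of (Fin.cons (Pi.single p 1) (fun l j => Ψ l (z j))) := by
      ext i j
      induction i using Fin.cases with
      | zero => simp [Matrix.updateRow_apply]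
      | succ l => simp [Matrix.updateRow_apply, Fin.succ_ne_zero l, hN]
    rw [hupd, Matrix.det_succ_row_zero]
    rw [Fintype.sum_eq_single p]
    · have hsub : (Matrix.of (Fin.cons (Pi.single p 1) (fun l j => Ψ l (z j)))).submatrix
          Fin.succ p.succAbove = M.submatrix id p.succAbove := by
        ext l t
        simp [Matrix.submatrix_apply, hM]
      rw [hsub]
      simp [hDdef]
    · intro q hq
      simp [Pi.single_eq_of_ne hq]
  have key : ∀ p, N.det * r p = (∑ q, r q * r q) * ((-1 : ℝ) ^ (p : ℕ) * D p) := by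
    intro p
    have h1 : N.adjugate.mulVec (N.mulVec r) = N.det • r := by
      rw [Matrix.mulVec_mulVec, Matrix.adjugate_mul, Matrix.smul_mulVec,
        Matrix.one_mulVec]
    rw [hmul, Matrix.mulVec_single] at h1
    have h2 := congrFun h1 p
    simp only [Pi.smul_apply, smul_eq_mul, Matrix.col_apply, op_smul_eq_mul] at h2
    rw [← h2, hadj p]; ring
  obtain ⟨i0, hi0⟩ := hne
  have hQ : 0 < ∑ q, r q * r q :=
    Finset.sum_pos' (fun q _ => mul_self_nonneg _)
      ⟨i0, Finset.mem_univ _, mul_self_pos.mpr hi0⟩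
  have hdet : N.det ≠ 0 := by
    intro h
    have h0 := key 0
    rw [h] at h0
    rw [zero_mul] at h0
    have hpos : 0 < (∑ q, r q * r q) * ((-1 : ℝ) ^ ((0 : Fin (k + 1)) : ℕ) * D 0) := by
      simp only [Fin.val_zero, pow_zero, one_mul]
      exact mul_pos hQ (hDpos 0)
    linarith
  set s : ℝ := if 0 < N.det then 1 else -1 with hs
  have hsdet : 0 < s * N.det := by
    rcases lt_trichotomy N.det 0 with h | h | h
    · rw [hs, if_neg (by linarith)]; linarith
    · exact absurd h hdet
    · rw [hs, if_pos h]; linarith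
  have hsign : ∀ i : Fin (k + 1),
      (Even (i : ℕ) → 0 < s * r i) ∧ (Odd (i : ℕ) → s * r i < 0) := by
    intro i
    constructor
    · intro hev
      have h := key i
      rw [hev.neg_one_pow, one_mul] at h
      have hpos : 0 < N.det * r i := h ▸ mul_pos hQ (hDpos i)
      nlinarith [mul_pos hsdet hpos, mul_self_pos.mpr hdet]
    · intro hodd
      have h := key i
      rw [hodd.neg_one_pow] at h
      have hneg : N.det * r i < 0 := by
        rw [h]; have := mul_pos hQ (hDpos i); nlinarith
      nlinarith [mul_pos_of_neg_of_neg (neg_neg_iff_pos.mpr hsdet) hneg,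
        mul_self_pos.mpr hdet, hsdet]
  refine ⟨fun i => ?_, s, ?_, hsign⟩
  · rcases Nat.even_or_odd (i : ℕ) with h | h
    · have := (hsign i).1 h
      intro h0; rw [h0, mul_zero] at this; exact lt_irrefl _ this
    · have := (hsign i).2 h
      intro h0; rw [h0, mul_zero] at this; exact lt_irrefl _ this
  · rw [hs]; split <;> simp
end

section
/- Let k = 2n-1 and let Ψ_0 = 1, Ψ_1, ..., Ψ_{k-1} be a Chebyshev system on [A,B]. Let c_1 < c̃_1 < c_2 < c̃_2 < ... < c_n < c̃_n = B be points in [A,B] with positive weights ω_1,...,ω_n and ω̃_1,...,ω̃_n satisfying ∑_i ω_i Ψ_l(c_i) = ∑_i ω̃_i Ψ_l(c̃_i) for l = 0,1,...,k-1. If Ψ_k is a function on [A,B] such that {Ψ_0, Ψ_1, ..., Ψ_{k-1}, Ψ_k} is also a Chebyshev system, then ∑_i ω_i Ψ_k(c_i) < ∑_i ω̃_i Ψ_k(c̃_i). -/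
private lemma sum_range_two_mul (f : ℕ → ℝ) (n : ℕ) :
    ∑ j ∈ Finset.range (2*n), f j = ∑ i ∈ Finset.range n, (f (2*i) + f (2*i+1)) := by
  induction n with
  | zero => simp
  | succ n ih =>
      have h : 2*(n+1) = (2*n + 1) + 1 := by ring
      rw [h, Finset.sum_range_succ, Finset.sum_range_succ, ih, Finset.sum_range_succ]
      ring

private lemma mono_of_succ (Z : ℕ → ℝ) (N : ℕ) (h : ∀ k, k+1 < N → Z k < Z (k+1)) :
    ∀ a b, b < N → a < b → Z a < Z b := by
  intro a b
  induction b with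
  | zero => omega
  | succ b ih =>
      intro hbN hab
      rcases Nat.lt_or_ge a b with h1 | h1
      · exact (ih (by omega) h1).trans (h b hbN)
      · have : a = b := by omega
        subst this; exact h a hbN

private lemma adj_corner (m : ℕ) (M : Matrix (Fin (m+1)) (Fin (m+1)) ℝ) :
    M.adjugate 0 (Fin.last m) = (-1)^m * (M.submatrix Fin.castSucc Fin.succ).det := by
  rw [Matrix.adjugate_apply, Matrix.det_succ_row _ (Fin.last m)]
  rw [Finset.sum_eq_single 0]
  · have hsub : ((M.updateRow (Fin.last m) (Pi.single 0 1)).submatrix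
        (Fin.last m).succAbove (0 : Fin (m+1)).succAbove) = M.submatrix Fin.castSucc Fin.succ := by
      ext i j
      simp only [Matrix.submatrix_apply, Fin.succAbove_last, Fin.succAbove_zero]
      exact congrFun (Matrix.updateRow_ne (Fin.castSucc_lt_last i).ne) _
    rw [hsub]
    simp [Matrix.updateRow_self, Fin.val_last]
  · intro j _ hj
    have : M.updateRow (Fin.last m) (Pi.single 0 1) (Fin.last m) j = 0 := by
      rw [Matrix.updateRow_self, Pi.single_eq_of_ne hj]
    rw [this]; ring
  · intro h; exact absurd (Finset.mem_univ _) h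

private lemma key_lemma (m : ℕ) (hodd : Odd m) (M : Matrix (Fin (m+1)) (Fin (m+1)) ℝ)
    (v : Fin (m+1) → ℝ)
    (hdet : 0 < M.det)
    (hminor : 0 < (M.submatrix Fin.castSucc Fin.succ).det)
    (hv0 : v 0 < 0)
    (hMv : ∀ i, i ≠ Fin.last m → M.mulVec v i = 0) :
    0 < M.mulVec v (Fin.last m) := by
  set S := M.mulVec v (Fin.last m) with hS
  have h1 : M.mulVec v = Pi.single (Fin.last m) S := by
    funext i
    by_cases h : i = Fin.last m
    · subst h; simp [hS]
    · rw [hMv i h, Pi.single_eq_of_ne h]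
  have h2 : M.det • v = M.adjugate.mulVec (Pi.single (Fin.last m) S) := by
    rw [← h1, Matrix.mulVec_mulVec, Matrix.adjugate_mul, Matrix.smul_mulVec,
      Matrix.one_mulVec]
  have h3 : M.det * v 0 = M.adjugate 0 (Fin.last m) * S := by
    have := congrFun h2 0
    simpa using this
  rw [adj_corner, Odd.neg_one_pow hodd] at h3
  have hlt : M.det * v 0 < 0 := mul_neg_of_pos_of_neg hdet hv0
  by_contra hcon
  push_neg at hcon
  nlinarith [mul_nonneg hminor.le (neg_nonneg.mpr hcon)]

/-- Proposition 1 of the paper: `k = 2n - 1`, `Ψ` lists `Ψ_0, …, Ψ_k` (so `2n` functions). -/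
theorem stmt_3 (A B : ℝ) (n : ℕ) (hn : 0 < n) (Ψ : Fin (2 * n) → ℝ → ℝ)
    (hΨ0 : ∀ x : ℝ, Ψ ⟨0, by omega⟩ x = 1)
    (hcont : ∀ i, ContinuousOn (Ψ i) (Set.Icc A B))
    (hcheb1 : ChebyshevSystem A B fun l : Fin (2 * n - 1) => Ψ (Fin.castLE (by omega) l))
    (hcheb2 : ChebyshevSystem A B Ψ)
    (c ct : Fin n → ℝ) (ω ωt : Fin n → ℝ)
    (hω : ∀ i, 0 < ω i) (hωt : ∀ i, 0 < ωt i)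
    (hmemc : ∀ i, c i ∈ Set.Icc A B) (hmemct : ∀ i, ct i ∈ Set.Icc A B)
    (hord1 : ∀ i : Fin n, c i < ct i)
    (hord2 : ∀ i : Fin n, ∀ h : i.val + 1 < n, ct i < c ⟨i.val + 1, h⟩)
    (hB : ct ⟨n - 1, by omega⟩ = B)
    (heq : ∀ l : Fin (2 * n - 1),
      ∑ i, ω i * Ψ (Fin.castLE (by omega) l) (c i)
        = ∑ i, ωt i * Ψ (Fin.castLE (by omega) l) (ct i)) :
    ∑ i, ω i * Ψ ⟨2 * n - 1, by omega⟩ (c i)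
      < ∑ i, ωt i * Ψ ⟨2 * n - 1, by omega⟩ (ct i) := by
  classical
  -- ℕ-indexed versions of the data
  set cc : ℕ → ℝ := fun i => if h : i < n then c ⟨i, h⟩ else 0 with hcc
  set cct : ℕ → ℝ := fun i => if h : i < n then ct ⟨i, h⟩ else 0 with hcct
  set W : ℕ → ℝ := fun i => if h : i < n then ω ⟨i, h⟩ else 0 with hW
  set Wt : ℕ → ℝ := fun i => if h : i < n then ωt ⟨i, h⟩ else 0 with hWt
  set Z : ℕ → ℝ := fun j => if Even j then cc (j/2) else cct (j/2) with hZ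
  set V : ℕ → ℝ := fun j => if Even j then -(W (j/2)) else Wt (j/2) with hV
  have hZsucc : ∀ j, j + 1 < 2*n → Z j < Z (j+1) := by
    intro j hj
    rcases Nat.even_or_odd j with he | ho
    · obtain ⟨i, hi⟩ := id he
      have h1 : j / 2 = i := by omega
      have h2 : (j+1) / 2 = i := by omega
      have hin : i < n := by omega
      have hne : ¬ Even (j+1) := by simp [Nat.even_add_one, he]
      have e1 : Z j = c ⟨i, hin⟩ := by
        simp only [hZ]; rw [if_pos he, h1]; simp only [hcc]; rw [dif_pos hin]
      have e2 : Z (j+1) = ct ⟨i, hin⟩ := by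
        simp only [hZ]; rw [if_neg hne, h2]; simp only [hcct]; rw [dif_pos hin]
      rw [e1, e2]
      exact hord1 _
    · obtain ⟨i, hi⟩ := id ho
      have h1 : j / 2 = i := by omega
      have h2 : (j+1) / 2 = i + 1 := by omega
      have hin : i + 1 < n := by omega
      have hne : ¬ Even j := by simp [hi, parity_simps]
      have he1 : Even (j+1) := by simpa [Nat.even_add_one] using hne
      have hin0 : i < n := Nat.lt_of_succ_lt hin
      have e1 : Z j = ct ⟨i, hin0⟩ := by
        simp only [hZ]; rw [if_neg hne, h1]; simp only [hcct]; rw [dif_pos hin0]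
      have e2 : Z (j+1) = c ⟨i+1, hin⟩ := by
        simp only [hZ]; rw [if_pos he1, h2]; simp only [hcc]; rw [dif_pos hin]
      rw [e1, e2]
      exact hord2 ⟨i, hin0⟩ hin
  have hZmono := mono_of_succ Z (2*n) hZsucc
  have hZmem : ∀ j, j < 2*n → Z j ∈ Set.Icc A B := by
    intro j hj
    have hin : j / 2 < n := by omega
    rcases Nat.even_or_odd j with he | ho
    · have e1 : Z j = c ⟨j/2, hin⟩ := by
        simp only [hZ]; rw [if_pos he]; simp only [hcc]; rw [dif_pos hin]
      rw [e1]; exact hmemc _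
    · have hne : ¬ Even j := Nat.not_even_iff_odd.mpr ho
      have e1 : Z j = ct ⟨j/2, hin⟩ := by
        simp only [hZ]; rw [if_neg hne]; simp only [hcct]; rw [dif_pos hin]
      rw [e1]; exact hmemct _
  -- key sum identity
  have hsum : ∀ g : ℝ → ℝ, ∑ j ∈ Finset.range (2*n), g (Z j) * V j
      = ∑ i, ωt i * g (ct i) - ∑ i, ω i * g (c i) := by
    intro g
    rw [sum_range_two_mul]
    have step : ∀ i ∈ Finset.range n,
        g (Z (2*i)) * V (2*i) + g (Z (2*i+1)) * V (2*i+1)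
          = (fun k : ℕ => if h : k < n then
              ωt ⟨k, h⟩ * g (ct ⟨k, h⟩) - ω ⟨k, h⟩ * g (c ⟨k, h⟩) else 0) i := by
      intro i hi
      have hin : i < n := Finset.mem_range.mp hi
      have he : Even (2*i) := ⟨i, by ring⟩
      have hne : ¬ Even (2*i+1) := by simp [Nat.even_add_one, he]
      have h1 : (2*i) / 2 = i := by omega
      have h2 : (2*i+1) / 2 = i := by omega
      have eZ1 : Z (2*i) = c ⟨i, hin⟩ := by
        simp only [hZ]; rw [if_pos he, h1]; simp only [hcc]; rw [dif_pos hin]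
      have eZ2 : Z (2*i+1) = ct ⟨i, hin⟩ := by
        simp only [hZ]; rw [if_neg hne, h2]; simp only [hcct]; rw [dif_pos hin]
      have eV1 : V (2*i) = -(ω ⟨i, hin⟩) := by
        simp only [hV]; rw [if_pos he, h1]; simp only [hW]; rw [dif_pos hin]
      have eV2 : V (2*i+1) = ωt ⟨i, hin⟩ := by
        simp only [hV]; rw [if_neg hne, h2]; simp only [hWt]; rw [dif_pos hin]
      show _ = if h : i < n then
          ωt ⟨i, h⟩ * g (ct ⟨i, h⟩) - ω ⟨i, h⟩ * g (c ⟨i, h⟩) else 0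
      rw [eZ1, eZ2, eV1, eV2, dif_pos hin]
      ring
    rw [Finset.sum_congr rfl step, ← Fin.sum_univ_eq_sum_range]
    have step2 : ∀ i ∈ (Finset.univ : Finset (Fin n)),
        (if h : (i : ℕ) < n then
            ωt ⟨i, h⟩ * g (ct ⟨i, h⟩) - ω ⟨i, h⟩ * g (c ⟨i, h⟩) else 0)
          = ωt i * g (ct i) - ω i * g (c i) := by
      intro i _
      exact dif_pos i.isLt
    rw [Finset.sum_congr rfl step2, Finset.sum_sub_distrib]
  -- the matrix setup
  obtain ⟨m, hm⟩ : ∃ m, 2*n = m + 1 := ⟨2*n-1, by omega⟩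
  have hoddm : Odd m := ⟨n-1, by omega⟩
  set M : Matrix (Fin (m+1)) (Fin (m+1)) ℝ :=
    Matrix.of (fun i j => Ψ (Fin.cast hm.symm i) (Z j.val)) with hM
  set v : Fin (m+1) → ℝ := fun j => V j.val with hv
  have hzmono : StrictMono (fun j : Fin (2*n) => Z j.val) := by
    intro a b hab
    exact hZmono _ _ b.isLt hab
  have hdet : 0 < M.det := by
    have h := hcheb2 (fun j => Z j.val) hzmono (fun j => hZmem _ j.isLt)
    have : M = (Matrix.of fun i j : Fin (2*n) => Ψ i (Z j.val)).submatrix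
        (finCongr hm.symm) (finCongr hm.symm) := by
      ext i j; rfl
    rw [this, Matrix.det_submatrix_equiv_self]
    exact h
  have hminor : 0 < (M.submatrix Fin.castSucc Fin.succ).det := by
    have hz2 : StrictMono (fun l : Fin (2*n-1) => Z (l.val + 1)) := by
      intro a b hab
      exact hZmono _ _ (by omega) (by omega)
    have h := hcheb1 (fun l => Z (l.val + 1)) hz2
      (fun l => hZmem _ (by have := l.isLt; omega))
    have hmeq : m = 2*n - 1 := by omega
    have : M.submatrix Fin.castSucc Fin.succ
        = (Matrix.of fun (i j : Fin (2*n-1)) =>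
            Ψ (Fin.castLE (by omega) i) (Z (j.val + 1))).submatrix
          (finCongr hmeq) (finCongr hmeq) := by
      ext i j
      simp only [Matrix.submatrix_apply, Matrix.of_apply, hM]
      congr 1
    rw [this, Matrix.det_submatrix_equiv_self (finCongr hmeq)]
    exact h
  have hv0 : v 0 < 0 := by
    have : V 0 = -(ω ⟨0, hn⟩) := by
      simp [hV, hW, dif_pos hn]
    simp only [hv, Fin.val_zero, this, neg_neg, neg_lt_zero]
    exact hω _
  have hMv : ∀ i, i ≠ Fin.last m → M.mulVec v i = 0 := by
    intro i hi
    have hr : Finset.range (m+1) = Finset.range (2*n) := by rw [hm]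
    have hsum2 : M.mulVec v i = ∑ j ∈ Finset.range (m+1),
        Ψ (Fin.cast hm.symm i) (Z j) * V j :=
      Fin.sum_univ_eq_sum_range (fun j => Ψ (Fin.cast hm.symm i) (Z j) * V j) (m+1)
    rw [hsum2, hr, hsum]
    have hilt : i.val < 2*n - 1 := by
      have := i.isLt
      have : i.val ≠ m := fun h => hi (Fin.ext h)
      omega
    have hcast : Fin.cast hm.symm i = Fin.castLE (by omega) (⟨i.val, hilt⟩ : Fin (2*n-1)) := rfl
    rw [hcast, ← heq ⟨i.val, hilt⟩]
    ring
  have hfinal := key_lemma m hoddm M v hdet hminor hv0 hMv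
  have hr : Finset.range (m+1) = Finset.range (2*n) := by rw [hm]
  have hsum3 : M.mulVec v (Fin.last m) = ∑ j ∈ Finset.range (2*n),
      Ψ (Fin.cast hm.symm (Fin.last m)) (Z j) * V j := by
    rw [← hr]
    exact Fin.sum_univ_eq_sum_range
      (fun j => Ψ (Fin.cast hm.symm (Fin.last m)) (Z j) * V j) (m+1)
  have hcast2 : Fin.cast hm.symm (Fin.last m) = (⟨2*n-1, by omega⟩ : Fin (2*n)) := by
    apply Fin.ext
    simp [Fin.val_last]
    omega
  rw [hsum3, hcast2, hsum] at hfinal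
  linarith
end

section
/- Let k = 2n and let Ψ_0 = 1, Ψ_1, ..., Ψ_{k-1} be a Chebyshev system on [A,B]. Let A = c̃_0 < c_1 < c̃_1 < ... < c_n < c̃_n = B with positive weights ω_1,...,ω_n and ω̃_0, ω̃_1,...,ω̃_n satisfying ∑_{i=1}^n ω_i Ψ_l(c_i) = ∑_{i=0}^n ω̃_i Ψ_l(c̃_i) for l = 0,...,k-1. If Ψ_k is a function such that {Ψ_0, ..., Ψ_{k-1}, Ψ_k} is also a Chebyshev system, then ∑_i ω_i Ψ_k(c_i) < ∑_i ω̃_i Ψ_k(c̃_i). -/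
lemma sum_split_parity (m : ℕ) (g : ℕ → ℝ) :
    ∑ j ∈ Finset.range (2*m+1), g j
      = ∑ i ∈ Finset.range (m+1), g (2*i) + ∑ i ∈ Finset.range m, g (2*i+1) := by
  induction m with
  | zero => simp
  | succ m ih =>
    have h1 : 2*(m+1)+1 = (2*m+1)+1+1 := by ring
    rw [h1, Finset.sum_range_succ, Finset.sum_range_succ, ih,
      Finset.sum_range_succ (fun i => g (2*i)) (m+1),
      Finset.sum_range_succ (fun i => g (2*i+1)) m]
    have e1 : 2*m+1+1 = 2*(m+1) := by ring
    rw [e1]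
    ring

/-- Proposition 2 of the paper: `k = 2n`, `Ψ` lists `Ψ_0, …, Ψ_k` (so `2n + 1` functions). -/
theorem stmt_4 (A B : ℝ) (n : ℕ) (hn : 0 < n) (Ψ : Fin (2 * n + 1) → ℝ → ℝ)
    (hΨ0 : ∀ x : ℝ, Ψ 0 x = 1)
    (hcont : ∀ i, ContinuousOn (Ψ i) (Set.Icc A B))
    (hcheb1 : ChebyshevSystem A B fun l : Fin (2 * n) => Ψ l.castSucc)
    (hcheb2 : ChebyshevSystem A B Ψ)
    (c : Fin n → ℝ) (ct : Fin (n + 1) → ℝ) (ω : Fin n → ℝ) (ωt : Fin (n + 1) → ℝ)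
    (hω : ∀ i, 0 < ω i) (hωt : ∀ i, 0 < ωt i)
    (hmemc : ∀ i, c i ∈ Set.Icc A B) (hmemct : ∀ i, ct i ∈ Set.Icc A B)
    (hA : ct 0 = A) (hB : ct (Fin.last n) = B)
    (hord : ∀ i : Fin n, ct i.castSucc < c i ∧ c i < ct i.succ)
    (heq : ∀ l : Fin (2 * n),
      ∑ i, ω i * Ψ l.castSucc (c i) = ∑ i, ωt i * Ψ l.castSucc (ct i)) :
    ∑ i, ω i * Ψ (Fin.last (2 * n)) (c i)
      < ∑ i, ωt i * Ψ (Fin.last (2 * n)) (ct i) := by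
  classical
  -- merged points and signed weights, as functions on ℕ
  set z : ℕ → ℝ := fun j =>
    if Even j then (if h : j/2 < n+1 then ct ⟨j/2, h⟩ else 0)
    else (if h : j/2 < n then c ⟨j/2, h⟩ else 0) with hz
  set v : ℕ → ℝ := fun j =>
    if Even j then (if h : j/2 < n+1 then ωt ⟨j/2, h⟩ else 0)
    else (if h : j/2 < n then -ω ⟨j/2, h⟩ else 0) with hv
  have hzeven : ∀ i : Fin (n+1), z (2*i) = ct i := by
    intro i
    have : (2*(i:ℕ))/2 = (i:ℕ) := by omega
    simp only [hz, even_two_mul, if_pos, this, i.isLt, dif_pos]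
  have hzodd : ∀ i : Fin n, z (2*i+1) = c i := by
    intro i
    have h1 : ¬ Even (2*(i:ℕ)+1) := by rw [Nat.even_iff]; omega
    have : (2*(i:ℕ)+1)/2 = (i:ℕ) := by omega
    simp only [hz, h1, if_neg, this, i.isLt, dif_pos, not_false_iff]
  have hveven : ∀ i : Fin (n+1), v (2*i) = ωt i := by
    intro i
    have : (2*(i:ℕ))/2 = (i:ℕ) := by omega
    simp only [hv, even_two_mul, if_pos, this, i.isLt, dif_pos]
  have hvodd : ∀ i : Fin n, v (2*i+1) = -ω i := by
    intro i
    have h1 : ¬ Even (2*(i:ℕ)+1) := by rw [Nat.even_iff]; omega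
    have : (2*(i:ℕ)+1)/2 = (i:ℕ) := by omega
    simp only [hv, h1, if_neg, this, i.isLt, dif_pos, not_false_iff]
  -- the merged sum identity
  have hsum : ∀ f : ℝ → ℝ, ∑ j : Fin (2*n+1), v j * f (z j)
      = ∑ i, ωt i * f (ct i) - ∑ i, ω i * f (c i) := by
    intro f
    rw [Fin.sum_univ_eq_sum_range (fun j => v j * f (z j)), sum_split_parity]
    have h1 : ∑ i ∈ Finset.range (n+1), v (2*i) * f (z (2*i))
        = ∑ i, ωt i * f (ct i) := by
      rw [← Fin.sum_univ_eq_sum_range (fun i => v (2*i) * f (z (2*i)))]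
      exact Finset.sum_congr rfl fun i _ => by rw [hveven i, hzeven i]
    have h2 : ∑ i ∈ Finset.range n, v (2*i+1) * f (z (2*i+1))
        = -∑ i, ω i * f (c i) := by
      rw [← Fin.sum_univ_eq_sum_range (fun i => v (2*i+1) * f (z (2*i+1))),
        ← Finset.sum_neg_distrib]
      exact Finset.sum_congr rfl fun i _ => by rw [hvodd i, hzodd i]; ring
    rw [h1, h2]; ring
  -- strict monotonicity and membership of merged points
  have hzmono : StrictMono (fun j : Fin (2*n+1) => z j) := by
    have hstep : ∀ j : Fin (2*n), z (j.castSucc : ℕ) < z (j.succ : ℕ) := by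
      intro j
      rcases Nat.even_or_odd (j : ℕ) with he | ho
      · obtain ⟨i, hi⟩ := he
        have hin : i < n := by omega
        have h2 : (j : ℕ) = 2*i := by omega
        have h3 : ((j.succ : Fin (2*n+1)) : ℕ) = 2*i+1 := by simp [Fin.val_succ, h2]
        have h4 : ((j.castSucc : Fin (2*n+1)) : ℕ) = 2*i := by simp [h2]
        rw [h3, h4]
        have hcast : z (2*i) = ct ⟨i, by omega⟩ := hzeven ⟨i, by omega⟩
        have hc : z (2*i+1) = c ⟨i, hin⟩ := hzodd ⟨i, hin⟩
        rw [hcast, hc]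
        simpa [Fin.castSucc_mk] using (hord ⟨i, hin⟩).1
      · obtain ⟨i, hi⟩ := ho
        have hin : i < n := by omega
        have h3 : ((j.succ : Fin (2*n+1)) : ℕ) = 2*(i+1) := by simp [Fin.val_succ, hi]; ring
        have h4 : ((j.castSucc : Fin (2*n+1)) : ℕ) = 2*i+1 := by simp [hi]
        rw [h3, h4]
        have hc : z (2*i+1) = c ⟨i, hin⟩ := hzodd ⟨i, hin⟩
        have hcast : z (2*(i+1)) = ct ⟨i+1, by omega⟩ := hzeven ⟨i+1, by omega⟩
        rw [hc, hcast]
        simpa [Fin.succ_mk] using (hord ⟨i, hin⟩).2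
    exact Fin.strictMono_iff_lt_succ.2 hstep
  have hzmem : ∀ j : Fin (2*n+1), z j ∈ Set.Icc A B := by
    intro j
    rcases Nat.even_or_odd (j : ℕ) with he | ho
    · obtain ⟨i, hi⟩ := he
      have hin : i < n+1 := by omega
      have : (j : ℕ) = 2*i := by omega
      rw [this]
      rw [hzeven ⟨i, hin⟩]; exact hmemct _
    · obtain ⟨i, hi⟩ := ho
      have hin : i < n := by omega
      have : (j : ℕ) = 2*i+1 := by omega
      rw [this]
      rw [hzodd ⟨i, hin⟩]; exact hmemc _
  -- the matrix
  set M : Matrix (Fin (2*n+1)) (Fin (2*n+1)) ℝ :=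
    Matrix.of (fun i j => Ψ i (z j)) with hM
  have hD : 0 < M.det := hcheb2 (fun j : Fin (2*n+1) => z j) hzmono hzmem
  set u : Fin (2*n+1) → ℝ := fun j => M.adjugate j (Fin.last (2*n)) with hu
  -- mulVec relation for u
  have hMu : M.mulVec u = Pi.single (Fin.last (2*n)) M.det := by
    funext l
    have : M.mulVec u l = (M * M.adjugate) l (Fin.last (2*n)) := by
      simp [Matrix.mulVec, Matrix.mul_apply, dotProduct, hu]
    rw [this, Matrix.mul_adjugate]
    simp [Matrix.smul_apply, Matrix.one_apply, Pi.single_apply]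
  -- positivity of u 0
  have hu0 : 0 < u 0 := by
    have hadj := Matrix.adjugate_fin_succ_eq_det_submatrix M (0 : Fin (2*n+1)) (Fin.last (2*n))
    show 0 < M.adjugate 0 (Fin.last (2*n))
    rw [hadj]
    have h0 : ((Fin.last (2*n) : Fin (2*n+1)) : ℕ) + ((0 : Fin (2*n+1)) : ℕ) = 2*n := by simp
    rw [h0]
    have hpow : ((-1 : ℝ)) ^ (2*n) = 1 := by
      rw [pow_mul]; norm_num
    rw [hpow, one_mul]
    have hsub : M.submatrix (Fin.last (2*n)).succAbove (0 : Fin (2*n+1)).succAbove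
        = Matrix.of (fun (l : Fin (2*n)) (j : Fin (2*n)) => Ψ l.castSucc (z (j.succ : ℕ))) := by
      funext l j
      simp [Matrix.submatrix_apply, Fin.succAbove_last, Fin.succAbove_zero, hM]
    rw [hsub]
    exact hcheb1 (fun j : Fin (2*n) => z (j.succ : ℕ))
      (fun a b hab => hzmono (by simpa using (Fin.succ_lt_succ_iff.2 hab)))
      (fun j => hzmem j.succ)
  -- mulVec relation for v
  set vf : Fin (2*n+1) → ℝ := fun j => v j with hvf
  set s : ℝ := ∑ j : Fin (2*n+1), v j * Ψ (Fin.last (2*n)) (z j) with hs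
  have hMv : M.mulVec vf = Pi.single (Fin.last (2*n)) s := by
    funext l
    have hentry : M.mulVec vf l = ∑ j : Fin (2*n+1), v j * Ψ l (z j) := by
      simp [Matrix.mulVec, dotProduct, hM, hvf, mul_comm]
    induction l using Fin.lastCases with
    | last => rw [hentry, Pi.single_eq_same, hs]
    | cast l' =>
      rw [hentry, hsum (Ψ l'.castSucc), Pi.single_eq_of_ne (Fin.castSucc_lt_last l').ne]
      rw [heq l']; ring
  -- injectivity and conclusion
  have hinj : Function.Injective M.mulVec :=
    Matrix.mulVec_injective_iff_isUnit.2
      (by rw [Matrix.isUnit_iff_isUnit_det]; exact (isUnit_iff_ne_zero.2 hD.ne'))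
  have hkey : M.det • vf = s • u := by
    apply hinj
    rw [Matrix.mulVec_smul, Matrix.mulVec_smul, hMu, hMv]
    funext l
    by_cases hl : l = Fin.last (2*n) <;> simp [Pi.single_apply, hl, mul_comm]
  have h0 : M.det * vf 0 = s * u 0 := by
    have := congrFun hkey 0
    simpa using this
  have hvf0 : vf 0 = ωt 0 := by
    have := hveven 0
    simpa [hvf] using this
  have hspos : 0 < s := by
    have h1 : 0 < M.det * vf 0 := by
      rw [hvf0]; exact mul_pos hD (hωt 0)
    rw [h0] at h1
    by_contra hns
    push_neg at hns
    nlinarith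
  have hfin := hsum (Ψ (Fin.last (2*n)))
  rw [← hs] at hfin
  have h2n : (2 : ℕ) * n = 2 * n := rfl
  linarith [hfin, hspos]
end

section
/- Let Ψ_0 = 1, Ψ_1, ..., Ψ_k be k-times continuously differentiable functions on [A,B]. Define inductively f_{l,1} = Ψ_l' for l = 1,...,k, and f_{l,t} = (f_{l,t-1}/f_{t-1,t-1})' for 2 ≤ t ≤ l ≤ k. If f_{l,l}(c) > 0 for all c ∈ [A,B] and all l = 1,...,k, then {1, Ψ_1, ..., Ψ_k} is a Chebyshev system on [A,B]: for any A ≤ z_0 < z_1 < ... < z_k ≤ B, the determinant det[(Ψ_i(z_j))_{0≤i,j≤k}] > 0 (with Ψ_0 = 1). -/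
open MeasureTheory

lemma det_updateColumn_integral {k : ℕ} (M : Matrix (Fin k) (Fin k) ℝ) (m : Fin k)
    {a b : ℝ} {w : ℝ → Fin k → ℝ} (hw : IntervalIntegrable w volume a b) :
    (M.updateCol m (fun i => ∫ s in a..b, w s i)).det
      = ∫ s in a..b, (M.updateCol m (w s)).det := by
  let L : (Fin k → ℝ) →ₗ[ℝ] ℝ :=
    { toFun := fun u => (M.updateCol m u).det
      map_add' := fun u v => Matrix.det_updateCol_add M m u v
      map_smul' := fun s u => by
        simpa using Matrix.det_updateCol_smul M m s u }
  let L' : (Fin k → ℝ) →L[ℝ] ℝ := LinearMap.toContinuousLinearMap L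
  have h1 : (fun i => ∫ s in a..b, w s i) = ∫ s in a..b, w s := by
    funext i
    have := (ContinuousLinearMap.proj (R := ℝ) (φ := fun _ : Fin k => ℝ) i).intervalIntegral_comp_comm hw
    simp only [ContinuousLinearMap.proj_apply] at this
    exact this
  have h2 := L'.intervalIntegral_comp_comm hw
  have h3 : ∀ u : Fin k → ℝ, L' u = (M.updateCol m u).det := fun u => rfl
  rw [h1]
  rw [← h3, ← h2]
  simp only [h3]

lemma cheb : ∀ (k : ℕ) (A B : ℝ) (Ψ : ℕ → ℝ → ℝ), (∀ x : ℝ, Ψ 0 x = 1) →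
    ∀ f : ℕ → ℕ → ℝ → ℝ,
    (∀ l, 1 ≤ l → l ≤ k → ∀ c ∈ Set.Icc A B, HasDerivAt (Ψ l) (f l 1 c) c) →
    (∀ t l, 2 ≤ t → t ≤ l → l ≤ k → ∀ c ∈ Set.Icc A B,
      HasDerivAt (fun x => f l (t - 1) x / f (t - 1) (t - 1) x) (f l t c) c) →
    (∀ l, 1 ≤ l → l ≤ k → ∀ c ∈ Set.Icc A B, 0 < f l l c) →
    (∀ t l, 1 ≤ t → t ≤ l → l ≤ k → ContinuousOn (f l t) (Set.Icc A B)) →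
    ∀ z : Fin (k + 1) → ℝ, StrictMono z → (∀ i, z i ∈ Set.Icc A B) →
      0 < (Matrix.of fun i j : Fin (k + 1) => Ψ (i : ℕ) (z j)).det := by
  intro k
  induction k with
  | zero =>
    intro A B Ψ hΨ0 f _ _ _ _ z _ _
    rw [Matrix.det_fin_one]
    simp [hΨ0]
  | succ k ih =>
    intro A B Ψ hΨ0 f hf1 hft hpos hcont z hz hzm
    -- the columns-differences matrix
    set Bm : Matrix (Fin (k + 2)) (Fin (k + 2)) ℝ :=
      Matrix.of fun i j => Fin.cases (Ψ (i : ℕ) (z 0))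
        (fun j' : Fin (k + 1) => Ψ (i : ℕ) (z j'.succ) - Ψ (i : ℕ) (z j'.castSucc)) j with hBm
    have hdet1 : (Matrix.of fun i j : Fin (k + 2) => Ψ (i : ℕ) (z j)).det = Bm.det := by
      refine Matrix.det_eq_of_forall_col_eq_smul_add_pred (fun _ => (1 : ℝ)) ?_ ?_
      · intro i; simp [hBm]
      · intro i j
        simp only [hBm, Matrix.of_apply, Fin.cases_succ]
        ring
    have hB0 : ∀ j, Bm 0 j = if j = 0 then 1 else 0 := by
      intro j
      induction j using Fin.cases with
      | zero => simp [hBm, hΨ0]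
      | succ j' => simp [hBm, hΨ0, Fin.succ_ne_zero]
    have hsAb : (0 : Fin (k + 2)).succAbove = Fin.succ := funext fun i => Fin.zero_succAbove i
    have hdet2 : Bm.det = (Bm.submatrix Fin.succ Fin.succ).det := by
      rw [Matrix.det_succ_row_zero]
      rw [Finset.sum_eq_single 0]
      · rw [hB0, hsAb]; simp
      · intro j _ hj; rw [hB0]; simp [hj]
      · simp
    -- entries as integrals
    set v : Fin (k + 1) → ℝ → ℝ := fun i s => f ((i : ℕ) + 1) 1 s with hv
    have hsub : ∀ j : Fin (k + 1), Set.uIcc (z j.castSucc) (z j.succ) ⊆ Set.Icc A B := by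
      intro j
      rw [Set.uIcc_of_le (hz (Fin.castSucc_lt_succ : j.castSucc < j.succ)).le]
      exact Set.Icc_subset_Icc (hzm _).1 (hzm _).2
    have hvcont : ∀ (i : Fin (k + 1)) (j : Fin (k + 1)),
        ContinuousOn (v i) (Set.uIcc (z j.castSucc) (z j.succ)) := by
      intro i j
      exact (hcont 1 ((i : ℕ) + 1) le_rfl (by omega) (by have := i.isLt; omega)).mono (hsub j)
    have hFTC : ∀ (i : Fin (k + 1)) (j : Fin (k + 1)),
        Bm i.succ j.succ = ∫ s in (z j.castSucc)..(z j.succ), v i s := by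
      intro i j
      rw [intervalIntegral.integral_eq_sub_of_hasDerivAt
        (f := Ψ ((i : ℕ) + 1))
        (fun x hx => hf1 ((i : ℕ) + 1) (by omega) (by have := i.isLt; omega) x (hsub j hx))
        ((hvcont i j).intervalIntegrable)]
      simp [hBm, Fin.val_succ]
    have hBsub : Bm.submatrix Fin.succ Fin.succ
        = Matrix.of fun i j : Fin (k + 1) => ∫ s in (z j.castSucc)..(z j.succ), v i s := by
      ext i j
      rw [Matrix.submatrix_apply, hFTC i j]; rfl
    rw [hdet1, hdet2, hBsub]
    -- the reduced system
    set Ψ' : ℕ → ℝ → ℝ := fun l x => if l = 0 then 1 else f (l + 1) 1 x / f 1 1 x with hΨ'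
    set f' : ℕ → ℕ → ℝ → ℝ := fun l t => f (l + 1) (t + 1) with hf'
    have IH : ∀ t : Fin (k + 1) → ℝ, StrictMono t → (∀ i, t i ∈ Set.Icc A B) →
        0 < (Matrix.of fun i j : Fin (k + 1) => Ψ' (i : ℕ) (t j)).det := by
      apply ih A B Ψ' (fun x => by simp [hΨ']) f'
      · intro l hl1 hlk c hc
        have h := hft 2 (l + 1) le_rfl (by omega) (by omega) c hc
        have hfun : Ψ' l = fun x => f (l + 1) 1 x / f 1 1 x := by
          funext x
          simp only [hΨ']
          rw [if_neg (by omega : ¬ l = 0)]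
        rw [hfun]
        exact h
      · intro t l ht2 htl hlk c hc
        have h := hft (t + 1) (l + 1) (by omega) (by omega) (by omega) c hc
        simp only [Nat.add_sub_cancel] at h
        have ht1 : t - 1 + 1 = t := by omega
        simp only [hf', ht1]
        exact h
      · intro l hl1 hlk c hc
        exact hpos (l + 1) (by omega) (by omega) c hc
      · intro t l ht1 htl hlk
        exact hcont (t + 1) (l + 1) (by omega) (by omega) (by omega)
    -- the column-by-column integration
    have hab : ∀ j : Fin (k + 1), z j.castSucc < z j.succ := fun j => hz (Fin.castSucc_lt_succ : j.castSucc < j.succ)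
    have key : ∀ m : ℕ, m ≤ k + 1 → ∀ t : Fin (k + 1) → ℝ,
        (∀ j : Fin (k + 1), m ≤ (j : ℕ) → t j ∈ Set.Ioo (z j.castSucc) (z j.succ)) →
        0 < (Matrix.of fun i j : Fin (k + 1) =>
          if (j : ℕ) < m then ∫ s in (z j.castSucc)..(z j.succ), v i s else v i (t j)).det := by
      intro m
      induction m with
      | zero =>
        intro _ t ht
        have htm : ∀ j, t j ∈ Set.Ioo (z j.castSucc) (z j.succ) := fun j => ht j (Nat.zero_le _)
        have htmem : ∀ j, t j ∈ Set.Icc A B := fun j => hsub j (by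
          rw [Set.uIcc_of_le (hab j).le]
          exact Set.Ioo_subset_Icc_self (htm j))
        have hts : StrictMono t := by
          intro j1 j2 hj
          have h1 := (htm j1).2
          have h2 := (htm j2).1
          have hle : z j1.succ ≤ z j2.castSucc := by
            apply hz.monotone
            rw [Fin.le_def]
            simp only [Fin.val_succ, Fin.coe_castSucc]
            exact hj
          linarith
        have hmul : (Matrix.of fun i j : Fin (k + 1) =>
            if (j : ℕ) < 0 then ∫ s in (z j.castSucc)..(z j.succ), v i s else v i (t j))
            = Matrix.of fun i j : Fin (k + 1) =>
              (fun j : Fin (k+1) => f 1 1 (t j)) j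
                * (Matrix.of fun i j : Fin (k + 1) => Ψ' (i : ℕ) (t j)) i j := by
          ext i j
          simp only [Matrix.of_apply, Nat.not_lt_zero, if_false]
          by_cases hi : (i : ℕ) = 0
          · simp [hv, hΨ', hi]
          · have hne : f 1 1 (t j) ≠ 0 := (hpos 1 le_rfl (by omega) _ (htmem j)).ne'
            simp only [hv, hΨ']
            rw [if_neg hi, mul_comm, div_mul_cancel₀ _ hne]
        rw [hmul, Matrix.det_mul_row]
        exact mul_pos (Finset.prod_pos fun j _ => hpos 1 le_rfl (by omega) _ (htmem j))
          (IH t hts htmem)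
      | succ m ihm =>
        intro hm t ht
        set m' : Fin (k + 1) := ⟨m, by omega⟩ with hm'
        set M₀ : Matrix (Fin (k + 1)) (Fin (k + 1)) ℝ := Matrix.of fun i j =>
          if (j : ℕ) < m then (∫ s in (z j.castSucc)..(z j.succ), v i s) else v i (t j) with hM₀
        have hw : IntervalIntegrable (fun s => fun i => v i s) volume
            (z m'.castSucc) (z m'.succ) := by
          apply ContinuousOn.intervalIntegrable
          exact continuousOn_pi.mpr fun i => hvcont i m'
        have hmv : (m' : ℕ) = m := rfl
        have e1 : (Matrix.of fun i j : Fin (k + 1) =>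
            if (j : ℕ) < m + 1 then ∫ s in (z j.castSucc)..(z j.succ), v i s else v i (t j))
            = M₀.updateCol m' (fun i => ∫ s in (z m'.castSucc)..(z m'.succ), v i s) := by
          ext i j
          rw [Matrix.updateCol_apply, Matrix.of_apply]
          by_cases hj : j = m'
          · rw [if_pos hj, if_pos (by rw [hj, hmv]; omega), hj]
          · rw [if_neg hj]
            have hjm : (j : ℕ) ≠ m := fun h => hj (Fin.ext (h.trans hmv.symm))
            have hiff : ((j : ℕ) < m + 1) ↔ ((j : ℕ) < m) := by omega
            simp only [hiff]
            rfl
        rw [e1, det_updateColumn_integral M₀ m' hw]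
        apply intervalIntegral.intervalIntegral_pos_of_pos_on
        · apply ContinuousOn.intervalIntegrable
          have hdet : Continuous fun u : Fin (k + 1) → ℝ => (M₀.updateCol m' u).det := by
            apply Continuous.matrix_det
            apply continuous_matrix
            intro i j
            by_cases hj : j = m'
            · simp only [Matrix.updateCol_apply, if_pos hj]
              exact continuous_apply i
            · simp only [Matrix.updateCol_apply, if_neg hj]
              exact continuous_const
          exact hdet.comp_continuousOn (continuousOn_pi.mpr fun i => hvcont i m')
        · intro s hs
          have e2 : M₀.updateCol m' (fun i => v i s)
              = Matrix.of fun i j : Fin (k + 1) =>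
                if (j : ℕ) < m then ∫ u in (z j.castSucc)..(z j.succ), v i u
                else v i (Function.update t m' s j) := by
            ext i j
            rw [Matrix.updateCol_apply, Matrix.of_apply]
            by_cases hj : j = m'
            · subst hj
              rw [if_pos rfl, if_neg (by rw [hmv]; omega), Function.update_self]
            · rw [if_neg hj, Function.update_of_ne hj]
              rfl
          rw [e2]
          apply ihm (by omega)
          intro j hj
          by_cases hjm : j = m'
          · subst hjm
            rw [Function.update_self]
            exact hs
          · rw [Function.update_of_ne hjm]
            apply ht j
            have : (j : ℕ) ≠ m := fun h => hjm (Fin.ext h)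
            omega
        · exact hab m'
    have := key (k + 1) le_rfl (fun _ => 0) (fun j hj => absurd j.isLt (by omega))
    have heq : (Matrix.of fun i j : Fin (k + 1) =>
        if (j : ℕ) < k + 1 then ∫ s in (z j.castSucc)..(z j.succ), v i s else v i 0)
        = Matrix.of fun i j : Fin (k + 1) => ∫ s in (z j.castSucc)..(z j.succ), v i s := by
      ext i j
      simp [j.isLt]
      intro h
      exact absurd j.isLt (by omega)
    rw [heq] at this
    exact this

/-- Proposition 3 of the paper (positive case). `f l t` are the iterated divided
derivatives: `f l 1 = Ψ_l'` and `f l t = (f l (t-1) / f (t-1) (t-1))'`. -/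
theorem stmt_6 (A B : ℝ) (k : ℕ) (hk : 0 < k) (Ψ : ℕ → ℝ → ℝ)
    (hΨ0 : ∀ x : ℝ, Ψ 0 x = 1)
    (hsmooth : ∀ l ≤ k, ContDiffOn ℝ k (Ψ l) (Set.Icc A B))
    (f : ℕ → ℕ → ℝ → ℝ)
    (hf1 : ∀ l, 1 ≤ l → l ≤ k → ∀ c ∈ Set.Icc A B, HasDerivAt (Ψ l) (f l 1 c) c)
    (hft : ∀ t l, 2 ≤ t → t ≤ l → l ≤ k → ∀ c ∈ Set.Icc A B,
      HasDerivAt (fun x => f l (t - 1) x / f (t - 1) (t - 1) x) (f l t c) c)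
    (hpos : ∀ l, 1 ≤ l → l ≤ k → ∀ c ∈ Set.Icc A B, 0 < f l l c) :
    ∀ z : Fin (k + 1) → ℝ, StrictMono z → (∀ i, z i ∈ Set.Icc A B) →
      0 < (Matrix.of fun i j : Fin (k + 1) => Ψ (i : ℕ) (z j)).det := by
  intro z hz hzm
  have h01 : (0 : Fin (k + 1)) < ⟨1, by omega⟩ := by
    rw [Fin.lt_def]; simp
  have hAB : A < B :=
    lt_of_le_of_lt (hzm 0).1 (lt_of_lt_of_le (hz h01) (hzm _).2)
  have hu : UniqueDiffOn ℝ (Set.Icc A B) := uniqueDiffOn_Icc hAB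
  have hcd : ∀ t l, 1 ≤ t → t ≤ l → l ≤ k →
      ContDiffOn ℝ (↑(k - t)) (f l t) (Set.Icc A B) := by
    intro t
    induction t with
    | zero => intro l h; omega
    | succ t iht =>
      intro l h1 htl hlk
      by_cases ht0 : t = 0
      · subst ht0
        have hd := (hsmooth l hlk).derivWithin hu (m := (k - 1 : ℕ))
          (by norm_cast; omega)
        apply hd.congr
        intro x hx
        exact ((hf1 l (by omega) hlk x hx).hasDerivWithinAt.derivWithin (hu x hx)).symm
      · have ht1 : 1 ≤ t := by omega
        have hg : ContDiffOn ℝ (↑(k - t)) (fun x => f l t x / f t t x) (Set.Icc A B) :=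
          (iht l ht1 (by omega) hlk).div (iht t ht1 le_rfl (by omega))
            (fun x hx => (hpos t ht1 (by omega) x hx).ne')
        have hd := hg.derivWithin hu (m := (k - (t + 1) : ℕ))
          (by norm_cast; omega)
        apply hd.congr
        intro x hx
        exact ((hft (t + 1) l (by omega) htl hlk x hx).hasDerivWithinAt.derivWithin
          (hu x hx)).symm
  exact cheb k A B Ψ hΨ0 f hf1 hft hpos
    (fun t l h1 h2 h3 => (hcd t l h1 h2 h3).continuousOn) z hz hzm
end

section
/- Let Ψ_0 = 1, Ψ_1, ..., Ψ_k be k-times differentiable functions on [A,B] with iterated divided derivatives f_{l,l} as defined by f_{l,1} = Ψ_l' and f_{l,t} = (f_{l,t-1}/f_{t-1,t-1})'. If f_{l,l} > 0 on [A,B] for l = 1,...,k-1 and f_{k,k} < 0 on [A,B], then {1, Ψ_1, ..., Ψ_{k-1}, −Ψ_k} is a Chebyshev system on [A,B]. -/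
open Set Matrix

/-- Determinant whose `j`-th column is `∫ s in a j..b j, g i s` is positive,
provided pointwise determinants are nonneg on boxes and positive on open boxes. -/
lemma det_integral_pos {n : ℕ} (g : Fin n → ℝ → ℝ) (a b : Fin n → ℝ)
    (hab : ∀ j, a j < b j)
    (hcont : ∀ i j, ContinuousOn (g i) (Icc (a j) (b j)))
    (hnonneg : ∀ t : Fin n → ℝ, (∀ j, t j ∈ Icc (a j) (b j)) →
      0 ≤ (Matrix.of fun i j => g i (t j)).det)
    (hpos : ∀ t : Fin n → ℝ, (∀ j, t j ∈ Ioo (a j) (b j)) →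
      0 < (Matrix.of fun i j => g i (t j)).det) :
    0 < (Matrix.of fun i j : Fin n => ∫ s in (a j)..(b j), g i s).det := by
  classical
  -- transposed family of matrices: first `m` rows evaluated at `t`, rest integrals
  set M : ℕ → (Fin n → ℝ) → Matrix (Fin n) (Fin n) ℝ :=
    fun m t => Matrix.of fun j i =>
      if (j : ℕ) < m then g i (t j) else ∫ s in (a j)..(b j), g i s with hM
  have hrow : ∀ (m : ℕ) (hm : m < n) (t : Fin n → ℝ) (s : ℝ),
      M (m + 1) (Function.update t ⟨m, hm⟩ s)
        = (M m t).updateRow ⟨m, hm⟩ (fun i => g i s) := by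
    intro m hm t s
    ext j i
    by_cases hj : j = (⟨m, hm⟩ : Fin n)
    · subst hj
      simp [hM, Function.update_self]
    · rw [Matrix.updateRow_ne hj]
      have hne : (j : ℕ) ≠ m := by
        intro h; exact hj (Fin.ext h)
      have : Function.update t ⟨m, hm⟩ s j = t j := Function.update_of_ne hj _ _
      simp only [hM, Matrix.of_apply, this]
      have : ((j : ℕ) < m + 1) ↔ ((j : ℕ) < m) := by omega
      rw [if_congr this rfl rfl]
  have key : ∀ (m : ℕ) (hm : m < n) (t : Fin n → ℝ),
      (M m t).det = ∫ s in (a ⟨m, hm⟩)..(b ⟨m, hm⟩),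
        (M (m + 1) (Function.update t ⟨m, hm⟩ s)).det := by
    intro m hm t
    set jm : Fin n := ⟨m, hm⟩
    set F : ℝ → (Fin n → ℝ) := fun s i => g i s with hF
    have hFc : ContinuousOn F (Set.uIcc (a jm) (b jm)) := by
      rw [Set.uIcc_of_le (hab jm).le]
      exact continuousOn_pi.2 fun i => hcont i jm
    have hFint : IntervalIntegrable F MeasureTheory.volume (a jm) (b jm) :=
      hFc.intervalIntegrable
    set L : (Fin n → ℝ) →ₗ[ℝ] ℝ :=
      { toFun := fun v => ((M m t).updateRow jm v).det
        map_add' := fun u v => Matrix.det_updateRow_add _ _ _ _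
        map_smul' := fun c v => Matrix.det_updateRow_smul _ _ _ _ } with hL
    have hbase : (M m t).det = L (∫ s in (a jm)..(b jm), F s) := by
      have h1 : (fun i => ∫ s in (a jm)..(b jm), g i s)
          = ∫ s in (a jm)..(b jm), F s := by
        funext i
        have := (ContinuousLinearMap.proj (R := ℝ) (φ := fun _ : Fin n => ℝ) i
          ).intervalIntegral_comp_comm hFint
        simpa using this
      have h2 : M m t jm = fun i => ∫ s in (a jm)..(b jm), g i s := by
        funext i
        simp [hM, jm]
      conv_lhs => rw [← Matrix.updateRow_eq_self (M m t) jm]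
      rw [h2, h1]
      rfl
    have hcoe : ∀ v, (L.toContinuousLinearMap) v = L v := fun v => by
      rw [LinearMap.coe_toContinuousLinearMap']
    have hcomm := (L.toContinuousLinearMap).intervalIntegral_comp_comm hFint
    have hthis : ∀ s, (L.toContinuousLinearMap) (F s)
        = (M (m + 1) (Function.update t ⟨m, hm⟩ s)).det := by
      intro s
      rw [hcoe, hrow m hm t s]
      rfl
    calc (M m t).det = (L.toContinuousLinearMap) (∫ s in (a jm)..(b jm), F s) := by
          rw [hbase, hcoe]
      _ = ∫ s in (a jm)..(b jm), (L.toContinuousLinearMap) (F s) := hcomm.symm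
      _ = _ := by simp_rw [hthis]; rfl
  have hcontInt : ∀ (m : ℕ) (hm : m < n) (t : Fin n → ℝ),
      ContinuousOn (fun s => (M (m + 1) (Function.update t ⟨m, hm⟩ s)).det)
        (Icc (a ⟨m, hm⟩) (b ⟨m, hm⟩)) := by
    intro m hm t
    have hA : ContinuousOn (fun s => (M m t).updateRow ⟨m, hm⟩ (fun i => g i s))
        (Icc (a ⟨m, hm⟩) (b ⟨m, hm⟩)) := by
      apply continuousOn_pi.2
      intro j
      apply continuousOn_pi.2
      intro i
      by_cases hj : j = (⟨m, hm⟩ : Fin n)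
      · subst hj
        simp only [Matrix.updateRow_self]
        exact hcont i _
      · simp only [Matrix.updateRow_ne hj]
        exact continuousOn_const
    have hdet : Continuous fun A : Matrix (Fin n) (Fin n) ℝ => A.det :=
      continuous_id.matrix_det
    have := hdet.comp_continuousOn hA
    refine ContinuousOn.congr this ?_
    intro s _
    simp only [Function.comp_apply]
    rw [hrow m hm t s]
  have aux : ∀ d, d ≤ n → ∀ t : Fin n → ℝ,
      ((∀ j : Fin n, (j : ℕ) < n - d → t j ∈ Icc (a j) (b j)) → 0 ≤ (M (n - d) t).det) ∧
      ((∀ j : Fin n, (j : ℕ) < n - d → t j ∈ Ioo (a j) (b j)) → 0 < (M (n - d) t).det) := by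
    intro d
    induction d with
    | zero =>
      intro _ t
      have hMn : M (n - 0) t = (Matrix.of fun i j => g i (t j))ᵀ := by
        ext j i
        simp [hM, j.isLt]
      constructor
      · intro h
        rw [hMn, Matrix.det_transpose]
        exact hnonneg t fun j => h j (by omega)
      · intro h
        rw [hMn, Matrix.det_transpose]
        exact hpos t fun j => h j (by omega)
    | succ d IH =>
      intro hd t
      have hmn : n - (d + 1) < n := by omega
      have hmd : n - (d + 1) + 1 = n - d := by omega
      have hkey := key (n - (d + 1)) hmn t
      have hupdate : ∀ s ∈ Icc (a ⟨n - (d+1), hmn⟩) (b ⟨n - (d+1), hmn⟩),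
          (∀ j : Fin n, (j : ℕ) < n - (d+1) → t j ∈ Icc (a j) (b j)) →
          ∀ j : Fin n, (j : ℕ) < n - d →
            Function.update t ⟨n - (d+1), hmn⟩ s j ∈ Icc (a j) (b j) := by
        intro s hs ht j hj
        by_cases hjeq : j = (⟨n - (d+1), hmn⟩ : Fin n)
        · subst hjeq; rw [Function.update_self]; exact hs
        · rw [Function.update_of_ne hjeq]
          refine ht j ?_
          have : (j : ℕ) ≠ n - (d+1) := fun h => hjeq (Fin.ext h)
          omega
      have hupdate' : ∀ s ∈ Ioo (a ⟨n - (d+1), hmn⟩) (b ⟨n - (d+1), hmn⟩),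
          (∀ j : Fin n, (j : ℕ) < n - (d+1) → t j ∈ Ioo (a j) (b j)) →
          ∀ j : Fin n, (j : ℕ) < n - d →
            Function.update t ⟨n - (d+1), hmn⟩ s j ∈ Ioo (a j) (b j) := by
        intro s hs ht j hj
        by_cases hjeq : j = (⟨n - (d+1), hmn⟩ : Fin n)
        · subst hjeq; rw [Function.update_self]; exact hs
        · rw [Function.update_of_ne hjeq]
          refine ht j ?_
          have : (j : ℕ) ≠ n - (d+1) := fun h => hjeq (Fin.ext h)
          omega
      constructor
      · intro ht
        rw [hkey]
        apply intervalIntegral.integral_nonneg (hab _).le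
        intro s hs
        have h1 := (IH (by omega) (Function.update t ⟨n - (d+1), hmn⟩ s)).1
        rw [← hmd] at h1
        exact h1 fun j hj => hupdate s hs ht j (by omega)
      · intro ht
        rw [hkey]
        apply intervalIntegral.intervalIntegral_pos_of_pos_on
        · apply ContinuousOn.intervalIntegrable
          rw [Set.uIcc_of_le (hab _).le]
          exact hcontInt (n - (d+1)) hmn t
        · intro s hs
          have h1 := (IH (by omega) (Function.update t ⟨n - (d+1), hmn⟩ s)).2
          rw [← hmd] at h1
          exact h1 fun j hj => hupdate' s ⟨hs.1, hs.2⟩ ht j (by omega)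
        · exact hab _
  have hfin := (aux n le_rfl a).2 (by intro j hj; omega)
  have hM0 : (Matrix.of fun i j : Fin n => ∫ s in (a j)..(b j), g i s) = (M (n - n) a)ᵀ := by
    ext i j
    simp [hM, Nat.sub_self]
  rw [hM0, Matrix.det_transpose]
  exact hfin
lemma cheb_pos : ∀ (k : ℕ) (A B : ℝ), A < B → ∀ (Ψ : ℕ → ℝ → ℝ), (∀ x, Ψ 0 x = 1) →
    ∀ (f : ℕ → ℕ → ℝ → ℝ),
    (∀ l t, 1 ≤ t → t ≤ l → l ≤ k → ContinuousOn (f l t) (Icc A B)) →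
    (∀ l, 1 ≤ l → l ≤ k → ∀ c ∈ Icc A B, HasDerivAt (Ψ l) (f l 1 c) c) →
    (∀ t l, 2 ≤ t → t ≤ l → l ≤ k → ∀ c ∈ Icc A B,
      HasDerivAt (fun x => f l (t-1) x / f (t-1) (t-1) x) (f l t c) c) →
    (∀ l, 1 ≤ l → l ≤ k → ∀ c ∈ Icc A B, 0 < f l l c) →
    ∀ z : Fin (k+1) → ℝ, StrictMono z → (∀ i, z i ∈ Icc A B) →
    0 < (Matrix.of fun i j : Fin (k+1) => Ψ (i:ℕ) (z j)).det := by
  intro k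
  induction k with
  | zero =>
    intro A B hAB Ψ hΨ0 f _ _ _ _ z _ _
    rw [Matrix.det_fin_one]
    simp [hΨ0]
  | succ k IH =>
    intro A B hAB Ψ hΨ0 f hcont hf1 hft hpos z hzm hzI
    classical
    have hf11pos : ∀ c ∈ Icc A B, 0 < f 1 1 c := hpos 1 (by omega) (by omega)
    -- reduced system
    set Ψ' : ℕ → ℝ → ℝ :=
      fun l => if l = 0 then fun _ => 1 else fun x => f (l+1) 1 x / f 1 1 x with hΨ'
    set f' : ℕ → ℕ → ℝ → ℝ := fun l t => f (l+1) (t+1) with hf'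
    have hΨ'0 : ∀ x, Ψ' 0 x = 1 := fun x => by simp [hΨ']
    have hcont' : ∀ l t, 1 ≤ t → t ≤ l → l ≤ k → ContinuousOn (f' l t) (Icc A B) :=
      fun l t h1 h2 h3 => hcont (l+1) (t+1) (by omega) (by omega) (by omega)
    have hf'1 : ∀ l, 1 ≤ l → l ≤ k → ∀ c ∈ Icc A B, HasDerivAt (Ψ' l) (f' l 1 c) c := by
      intro l h1 h2 c hc
      have h := hft 2 (l+1) (by omega) (by omega) (by omega) c hc
      have hne : ¬ (l = 0) := by omega
      simp only [hΨ', if_neg hne, hf']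
      exact h
    have hf't : ∀ t l, 2 ≤ t → t ≤ l → l ≤ k → ∀ c ∈ Icc A B,
        HasDerivAt (fun x => f' l (t-1) x / f' (t-1) (t-1) x) (f' l t c) c := by
      intro t l h1 h2 h3 c hc
      have h := hft (t+1) (l+1) (by omega) (by omega) (by omega) c hc
      have e1 : t - 1 + 1 = t := by omega
      simp only [hf', e1]
      exact h
    have hpos' : ∀ l, 1 ≤ l → l ≤ k → ∀ c ∈ Icc A B, 0 < f' l l c :=
      fun l h1 h2 c hc => hpos (l+1) (by omega) (by omega) c hc
    -- positivity of the pointwise reduced determinants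
    have hposAux : ∀ t : Fin (k+1) → ℝ, StrictMono t → (∀ j, t j ∈ Icc A B) →
        0 < (Matrix.of fun i j : Fin (k+1) => f ((i:ℕ)+1) 1 (t j)).det := by
      intro t htm htI
      have hent : (Matrix.of fun i j : Fin (k+1) => f ((i:ℕ)+1) 1 (t j))
          = Matrix.of fun i j : Fin (k+1) => f 1 1 (t j) * Ψ' (i:ℕ) (t j) := by
        ext i j
        by_cases hi : (i:ℕ) = 0
        · have hi0 : i = 0 := Fin.ext (by simp [hi])
          subst hi0
          simp [hΨ']
        · simp only [Matrix.of_apply, hΨ', if_neg hi]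
          rw [mul_div_cancel₀]
          exact (hf11pos (t j) (htI j)).ne'
      rw [hent]
      have := Matrix.det_mul_row (fun j : Fin (k+1) => f 1 1 (t j))
        (Matrix.of fun i j : Fin (k+1) => Ψ' (i:ℕ) (t j))
      rw [show (Matrix.of fun i j : Fin (k+1) => f 1 1 (t j) * Ψ' (i:ℕ) (t j))
          = Matrix.of fun i j : Fin (k+1) => (fun j => f 1 1 (t j)) j *
            (Matrix.of fun i j : Fin (k+1) => Ψ' (i:ℕ) (t j)) i j from rfl, this]
      apply mul_pos
      · exact Finset.prod_pos fun j _ => hf11pos (t j) (htI j)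
      · exact IH A B hAB Ψ' hΨ'0 f' hcont' hf'1 hf't hpos' t htm htI
    -- the column-difference matrix
    set M : Matrix (Fin (k+2)) (Fin (k+2)) ℝ :=
      Matrix.of fun i j : Fin (k+2) => Ψ (i:ℕ) (z j) with hMdef
    set T : Matrix (Fin (k+2)) (Fin (k+2)) ℝ :=
      Matrix.of fun a b : Fin (k+2) =>
        if a = b then (1:ℝ) else if (a:ℕ)+1 = (b:ℕ) then -1 else 0 with hT
    have hTtri : T.BlockTriangular id := by
      intro i j hij
      have h1 : ¬ (i = j) := by intro h; subst h; exact lt_irrefl _ hij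
      have h2 : ¬ ((i:ℕ)+1 = (j:ℕ)) := by
        have : (j:ℕ) < (i:ℕ) := hij
        omega
      simp [hT, h1, h2]
    have hTdet : T.det = 1 := by
      rw [Matrix.det_of_upperTriangular hTtri]
      simp [hT]
    have hMT0 : ∀ i : Fin (k+2), (M * T) i 0 = M i 0 := by
      intro i
      rw [Matrix.mul_apply]
      have : ∀ a : Fin (k+2), M i a * T a 0 = if a = 0 then M i a else 0 := by
        intro a
        by_cases h1 : a = (0 : Fin (k+2))
        · subst h1; simp [hT]
        · have h2 : ¬ ((a:ℕ)+1 = ((0 : Fin (k+2)):ℕ)) := by simp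
          simp [hT, h1, h2]
      rw [Finset.sum_congr rfl fun a _ => this a, Finset.sum_ite_eq' Finset.univ 0 (M i)]
      simp
    have hMT : ∀ (i : Fin (k+2)) (j : Fin (k+1)),
        (M * T) i j.succ = M i j.succ - M i j.castSucc := by
      intro i j
      rw [Matrix.mul_apply]
      have : ∀ a : Fin (k+2), M i a * T a j.succ =
          (if a = j.succ then M i a else 0) + (if a = j.castSucc then -M i a else 0) := by
        intro a
        have hcs : ((j.castSucc : ℕ) : ℕ) = (j : ℕ) := by simp
        by_cases h1 : a = j.succ <;> by_cases h2 : a = j.castSucc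
        · exfalso
          subst h1
          have := congrArg (fun x : Fin (k+2) => (x : ℕ)) h2
          simp at this
        · subst h1
          simp [hT, h2]
        · subst h2
          have hne : ¬ (j.castSucc = j.succ) := by
            intro h
            have := congrArg (fun x : Fin (k+2) => (x : ℕ)) h
            simp at this
          have hc : ((j.castSucc : Fin (k+2)) : ℕ) + 1 = ((j.succ : Fin (k+2)) : ℕ) := by simp
          simp [hT, hne, hc]
        · have hc : ¬ ((a:ℕ)+1 = ((j.succ : Fin (k+2)):ℕ)) := by
            intro h
            apply h2
            apply Fin.ext
            simp only [Fin.coe_castSucc]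
            have : ((j.succ : Fin (k+2)):ℕ) = (j:ℕ) + 1 := by simp
            omega
          have h2' : ¬ ((a:ℕ) = (j:ℕ)) := by
            intro h
            apply h2
            apply Fin.ext
            simp only [Fin.coe_castSucc]
            exact h
          simp [hT, h1, h2, hc, h2']
      rw [Finset.sum_congr rfl fun a _ => this a, Finset.sum_add_distrib,
        Finset.sum_ite_eq' Finset.univ j.succ (M i),
        Finset.sum_ite_eq' Finset.univ j.castSucc (fun a => -M i a)]
      simp [sub_eq_add_neg]
    -- integral representation of the difference matrix
    have hzlt : ∀ j : Fin (k+1), z j.castSucc < z j.succ :=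
      fun j => hzm (Fin.castSucc_lt_succ : j.castSucc < j.succ)
    have hsubI : ∀ j : Fin (k+1), Icc (z j.castSucc) (z j.succ) ⊆ Icc A B :=
      fun j => Set.Icc_subset_Icc (hzI _).1 (hzI _).2
    have hdiff : ∀ (i : Fin (k+1)) (j : Fin (k+1)),
        Ψ ((i:ℕ)+1) (z j.succ) - Ψ ((i:ℕ)+1) (z j.castSucc)
          = ∫ s in (z j.castSucc)..(z j.succ), f ((i:ℕ)+1) 1 s := by
      intro i j
      rw [intervalIntegral.integral_eq_sub_of_hasDerivAt]
      · intro x hx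
        rw [Set.uIcc_of_le (hzlt j).le] at hx
        exact hf1 ((i:ℕ)+1) (by omega) (by omega) x (hsubI j hx)
      · apply ContinuousOn.intervalIntegrable
        rw [Set.uIcc_of_le (hzlt j).le]
        exact (hcont ((i:ℕ)+1) 1 (by omega) (by omega) (by omega)).mono (hsubI j)
    -- main determinant chain
    have hMdet : M.det = ((M * T).submatrix Fin.succ Fin.succ).det := by
      have h1 : M.det = (M * T).det := by
        rw [Matrix.det_mul, hTdet, mul_one]
      rw [h1, Matrix.det_succ_row_zero]
      rw [Finset.sum_eq_single_of_mem 0 (Finset.mem_univ 0)]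
      · rw [hMT0 0]
        have : M 0 0 = 1 := by simp [hMdef, hΨ0]
        rw [this]
        simp [Fin.succAbove_zero]
      · intro j _ hj
        obtain ⟨j', rfl⟩ := Fin.exists_succ_eq.2 hj
        rw [hMT 0 j']
        have e1 : M 0 j'.succ = 1 := by simp [hMdef, hΨ0]
        have e2 : M 0 j'.castSucc = 1 := by simp [hMdef, hΨ0]
        rw [e1, e2]
        ring
    have hsubm : (M * T).submatrix Fin.succ Fin.succ
        = Matrix.of fun i j : Fin (k+1) =>
            ∫ s in (z j.castSucc)..(z j.succ), f ((i:ℕ)+1) 1 s := by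
      ext i j
      rw [Matrix.submatrix_apply, hMT i.succ j]
      have e1 : M i.succ j.succ = Ψ ((i:ℕ)+1) (z j.succ) := by
        simp [hMdef, Fin.val_succ]
      have e2 : M i.succ j.castSucc = Ψ ((i:ℕ)+1) (z j.castSucc) := by
        simp [hMdef, Fin.val_succ]
      rw [e1, e2, hdiff i j]
      simp
    -- apply the integral positivity lemma
    have hzIccAB : ∀ j : Fin (k+1), ∀ x ∈ Icc (z j.castSucc) (z j.succ), x ∈ Icc A B :=
      fun j x hx => hsubI j hx
    have hintpos : 0 < (Matrix.of fun i j : Fin (k+1) =>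
        ∫ s in (z j.castSucc)..(z j.succ), f ((i:ℕ)+1) 1 s).det := by
      apply det_integral_pos (fun i => f ((i:ℕ)+1) 1)
        (fun j => z j.castSucc) (fun j => z j.succ) hzlt
      · intro i j
        exact (hcont ((i:ℕ)+1) 1 (by omega) (by omega) (by omega)).mono (hsubI j)
      · -- nonneg on closed boxes
        intro t ht
        have hmono : Monotone t := by
          intro j j' hjj
          rcases eq_or_lt_of_le hjj with h | h
          · subst h; exact le_rfl
          · have h1 : t j ≤ z j.succ := (ht j).2
            have h2 : z j'.castSucc ≤ t j' := (ht j').1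
            have h3 : z j.succ ≤ z j'.castSucc := by
              apply hzm.monotone
              have : (j:ℕ) + 1 ≤ (j':ℕ) := h
              simp only [Fin.le_def, Fin.val_succ, Fin.coe_castSucc]
              omega
            linarith
        by_cases hinj : Function.Injective t
        · have hsm : StrictMono t := hmono.strictMono_of_injective hinj
          exact (hposAux t hsm fun j => hzIccAB j (t j) (ht j)).le
        · rw [Function.not_injective_iff] at hinj
          obtain ⟨j, j', heq, hne⟩ := hinj
          have : (Matrix.of fun i jj : Fin (k+1) => f ((i:ℕ)+1) 1 (t jj)).det = 0 := by
            apply Matrix.det_zero_of_column_eq hne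
            intro i
            simp [heq]
          rw [this]
      · -- positive on open boxes
        intro t ht
        have hsm : StrictMono t := by
          intro j j' hjj
          have h1 : t j < z j.succ := (ht j).2
          have h2 : z j'.castSucc < t j' := (ht j').1
          have h3 : z j.succ ≤ z j'.castSucc := by
            apply hzm.monotone
            have : (j:ℕ) + 1 ≤ (j':ℕ) := hjj
            simp only [Fin.le_def, Fin.val_succ, Fin.coe_castSucc]
            omega
          linarith
        exact hposAux t hsm fun j => hzIccAB j (t j) ⟨(ht j).1.le, (ht j).2.le⟩
    rw [hMdet, hsubm]
    exact hintpos
lemma f_contDiff (A B : ℝ) (hAB : A < B) (k : ℕ) (Ψ : ℕ → ℝ → ℝ) (f : ℕ → ℕ → ℝ → ℝ)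
    (hsmooth : ∀ l ≤ k, ContDiffOn ℝ k (Ψ l) (Icc A B))
    (hf1 : ∀ l, 1 ≤ l → l ≤ k → ∀ c ∈ Icc A B, HasDerivAt (Ψ l) (f l 1 c) c)
    (hft : ∀ t l, 2 ≤ t → t ≤ l → l ≤ k → ∀ c ∈ Icc A B,
      HasDerivAt (fun x => f l (t - 1) x / f (t - 1) (t - 1) x) (f l t c) c)
    (hden : ∀ l, 1 ≤ l → l ≤ k - 1 → ∀ c ∈ Icc A B, 0 < f l l c) :
    ∀ t l, 1 ≤ t → t ≤ l → l ≤ k → ContDiffOn ℝ (↑(k - t)) (f l t) (Icc A B) := by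
  intro t
  induction t with
  | zero => intro l h; omega
  | succ t IHt =>
    intro l h1 h2 h3
    by_cases ht : t = 0
    · subst ht
      have hD : ∀ c ∈ Icc A B, f l 1 c = derivWithin (Ψ l) (Icc A B) c := fun c hc =>
        ((hf1 l (by omega) h3 c hc).hasDerivWithinAt.derivWithin
          ((uniqueDiffOn_Icc hAB) c hc)).symm
      have e : (k - 1) + 1 = k := by omega
      have hle : ((k - 1 : ℕ) : WithTop ℕ∞) + 1 ≤ (k : WithTop ℕ∞) := by
        rw [← Nat.cast_one (R := WithTop ℕ∞), ← Nat.cast_add, e]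
      have := (hsmooth l h3).derivWithin (uniqueDiffOn_Icc hAB) hle
      exact this.congr hD
    · have ht1 : 1 ≤ t := by omega
      have hq : ContDiffOn ℝ (↑(k - t)) (fun x => f l t x / f t t x) (Icc A B) :=
        (IHt l ht1 (by omega) h3).div (IHt t ht1 le_rfl (by omega))
          (fun c hc => (hden t ht1 (by omega) c hc).ne')
      have hD : ∀ c ∈ Icc A B,
          f l (t + 1) c = derivWithin (fun x => f l t x / f t t x) (Icc A B) c := fun c hc =>
        ((hft (t + 1) l (by omega) h2 h3 c hc).hasDerivWithinAt.derivWithin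
          ((uniqueDiffOn_Icc hAB) c hc)).symm
      have e : (k - (t + 1)) + 1 = k - t := by omega
      have hle : ((k - (t + 1) : ℕ) : WithTop ℕ∞) + 1 ≤ ((k - t : ℕ) : WithTop ℕ∞) := by
        rw [← Nat.cast_one (R := WithTop ℕ∞), ← Nat.cast_add, e]
      have := hq.derivWithin (uniqueDiffOn_Icc hAB) hle
      exact this.congr hD

/-- Proposition 3 of the paper (negative case): if `f l l > 0` for `l = 1, …, k-1` and
`f k k < 0` on `[A,B]`, then `{1, Ψ_1, …, Ψ_{k-1}, -Ψ_k}` is a Chebyshev system. -/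
theorem stmt_7 (A B : ℝ) (k : ℕ) (hk : 0 < k) (Ψ : ℕ → ℝ → ℝ)
    (hΨ0 : ∀ x : ℝ, Ψ 0 x = 1)
    (hsmooth : ∀ l ≤ k, ContDiffOn ℝ k (Ψ l) (Set.Icc A B))
    (f : ℕ → ℕ → ℝ → ℝ)
    (hf1 : ∀ l, 1 ≤ l → l ≤ k → ∀ c ∈ Set.Icc A B, HasDerivAt (Ψ l) (f l 1 c) c)
    (hft : ∀ t l, 2 ≤ t → t ≤ l → l ≤ k → ∀ c ∈ Set.Icc A B,
      HasDerivAt (fun x => f l (t - 1) x / f (t - 1) (t - 1) x) (f l t c) c)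
    (hpos : ∀ l, 1 ≤ l → l ≤ k - 1 → ∀ c ∈ Set.Icc A B, 0 < f l l c)
    (hneg : ∀ c ∈ Set.Icc A B, f k k c < 0) :
    ∀ z : Fin (k + 1) → ℝ, StrictMono z → (∀ i, z i ∈ Set.Icc A B) →
      0 < (Matrix.of fun i j : Fin (k + 1) =>
        if (i : ℕ) = k then -Ψ k (z j) else Ψ (i : ℕ) (z j)).det := by
  classical
  intro z hzm hzI
  have hAB : A < B := by
    have h01 : z ⟨0, by omega⟩ < z ⟨1, by omega⟩ := hzm (by
      rw [Fin.mk_lt_mk]; omega)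
    have hA := (hzI ⟨0, by omega⟩).1
    have hB := (hzI ⟨1, by omega⟩).2
    linarith
  have hcontf := f_contDiff A B hAB k Ψ f hsmooth hf1 hft hpos
  -- modified system with last function negated
  set Φ : ℕ → ℝ → ℝ := fun l => if l = k then fun x => -(Ψ k x) else Ψ l with hΦ
  set g : ℕ → ℕ → ℝ → ℝ := fun l t => if l = k then fun x => -(f k t x) else f l t with hg
  have hΦ0 : ∀ x, Φ 0 x = 1 := by
    intro x
    have : ¬ (0 = k) := by omega
    simp [hΦ, this, hΨ0]
  have hcontg : ∀ l t, 1 ≤ t → t ≤ l → l ≤ k → ContinuousOn (g l t) (Set.Icc A B) := by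
    intro l t h1 h2 h3
    have hc := (hcontf t l h1 h2 h3).continuousOn
    by_cases hl : l = k
    · subst hl
      simp only [hg, if_pos rfl]
      exact hc.neg
    · simp only [hg, if_neg hl]
      exact hc
  have hg1 : ∀ l, 1 ≤ l → l ≤ k → ∀ c ∈ Set.Icc A B, HasDerivAt (Φ l) (g l 1 c) c := by
    intro l h1 h2 c hc
    by_cases hl : l = k
    · subst hl
      simp only [hΦ, hg, if_pos rfl]
      exact (hf1 l h1 h2 c hc).neg
    · simp only [hΦ, hg, if_neg hl]
      exact hf1 l h1 h2 c hc
  have hgt : ∀ t l, 2 ≤ t → t ≤ l → l ≤ k → ∀ c ∈ Set.Icc A B,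
      HasDerivAt (fun x => g l (t - 1) x / g (t - 1) (t - 1) x) (g l t c) c := by
    intro t l h1 h2 h3 c hc
    have hd : ¬ (t - 1 = k) := by omega
    by_cases hl : l = k
    · subst hl
      simp only [hg, if_pos rfl, if_neg hd]
      have := (hft t l h1 h2 h3 c hc).neg
      have heq : (fun x => -(f l (t - 1) x / f (t - 1) (t - 1) x))
          = fun x => -f l (t - 1) x / f (t - 1) (t - 1) x := by
        funext x; rw [neg_div]
      rw [← heq]
      exact this
    · simp only [hg, if_neg hl, if_neg hd]
      exact hft t l h1 h2 h3 c hc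
  have hgpos : ∀ l, 1 ≤ l → l ≤ k → ∀ c ∈ Set.Icc A B, 0 < g l l c := by
    intro l h1 h2 c hc
    by_cases hl : l = k
    · subst hl
      simp only [hg, if_pos rfl]
      linarith [hneg c hc]
    · simp only [hg, if_neg hl]
      exact hpos l h1 (by omega) c hc
  have hmain := cheb_pos k A B hAB Φ hΦ0 g hcontg hg1 hgt hgpos z hzm hzI
  have hMeq : (Matrix.of fun i j : Fin (k + 1) =>
        if (i : ℕ) = k then -Ψ k (z j) else Ψ (i : ℕ) (z j))
      = Matrix.of fun i j : Fin (k + 1) => Φ (i : ℕ) (z j) := by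
    ext i j
    by_cases hi : (i : ℕ) = k
    · simp [hΦ, hi]
    · simp [hΦ, hi]
  rw [hMeq]
  exact hmain
end

section
/- For a > 0, the family of six functions {1, e^{ax}, e^{2ax}, x, −x e^{ax}, x e^{2ax}} is a Chebyshev system on any interval [A,B]: for any A ≤ z_0 < z_1 < ... < z_5 ≤ B, the 6×6 determinant with rows given by these functions evaluated at z_0,...,z_5 is strictly positive. -/
open Real Filter Set

namespace Cheb8



/-- general form of our functions and their derivatives -/
noncomputable def F (a p q r s t u : ℝ) : ℝ → ℝ :=
  fun x => (p + q*x) + (r + s*x) * Real.exp (a*x) + (t + u*x) * Real.exp (2*a*x)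

lemma hasDerivAt_F (a p q r s t u x : ℝ) :
    HasDerivAt (F a p q r s t u) (F a q 0 (a*r+s) (a*s) (2*a*t+u) (2*a*u) x) x := by
  have h1 : HasDerivAt (fun y : ℝ => Real.exp (a*y)) (a * Real.exp (a*x)) x := by
    simpa [mul_comm] using (HasDerivAt.exp ((hasDerivAt_id x).const_mul a))
  have h2 : HasDerivAt (fun y : ℝ => Real.exp (2*a*y)) ((2*a) * Real.exp (2*a*x)) x := by
    simpa [mul_comm] using (HasDerivAt.exp ((hasDerivAt_id x).const_mul (2*a)))
  have l1 : HasDerivAt (fun y : ℝ => p + q*y) q x := by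
    simpa using ((hasDerivAt_id x).const_mul q).const_add p
  have l2 : HasDerivAt (fun y : ℝ => r + s*y) s x := by
    simpa using ((hasDerivAt_id x).const_mul s).const_add r
  have l3 : HasDerivAt (fun y : ℝ => t + u*y) u x := by
    simpa using ((hasDerivAt_id x).const_mul u).const_add t
  have := (l1.add (l2.mul h1)).add (l3.mul h2)
  refine (this.congr_deriv ?_).congr_of_eventuallyEq (Filter.Eventually.of_forall fun y => ?_)
  · simp only [F]; ring
  · simp only [F, Pi.add_apply, Pi.mul_apply]

lemma continuous_F (a p q r s t u : ℝ) : Continuous (F a p q r s t u) := by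
  unfold F; fun_prop

lemma rolleF (a p q r s t u : ℝ) {x y : ℝ} (hxy : x < y)
    (hx : F a p q r s t u x = 0) (hy : F a p q r s t u y = 0) :
    ∃ c, x < c ∧ c < y ∧ F a q 0 (a*r+s) (a*s) (2*a*t+u) (2*a*u) c = 0 := by
  obtain ⟨c, hc, h0⟩ := exists_hasDerivAt_eq_zero hxy
    ((continuous_F a p q r s t u).continuousOn) (hx.trans hy.symm)
    (fun w _ => hasDerivAt_F a p q r s t u w)
  exact ⟨c, hc.1, hc.2, h0⟩

/-- zero counting: six zeros force all coefficients to vanish -/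
lemma indep (a : ℝ) (ha : 0 < a) (c0 c1 c2 c3 c4 c5 : ℝ)
    {z0 z1 z2 z3 z4 z5 : ℝ}
    (h01 : z0 < z1) (h12 : z1 < z2) (h23 : z2 < z3) (h34 : z3 < z4) (h45 : z4 < z5)
    (e0 : F a c0 c3 c1 (-c4) c2 c5 z0 = 0)
    (e1 : F a c0 c3 c1 (-c4) c2 c5 z1 = 0)
    (e2 : F a c0 c3 c1 (-c4) c2 c5 z2 = 0)
    (e3 : F a c0 c3 c1 (-c4) c2 c5 z3 = 0)
    (e4 : F a c0 c3 c1 (-c4) c2 c5 z4 = 0)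
    (e5 : F a c0 c3 c1 (-c4) c2 c5 z5 = 0) :
    c0 = 0 ∧ c1 = 0 ∧ c2 = 0 ∧ c3 = 0 ∧ c4 = 0 ∧ c5 = 0 := by
  have ha' : a ≠ 0 := ha.ne'
  -- first derivative: 5 zeros
  obtain ⟨w0, hw0l, hw0r, f0⟩ := rolleF _ _ _ _ _ _ _ h01 e0 e1
  obtain ⟨w1, hw1l, hw1r, f1⟩ := rolleF _ _ _ _ _ _ _ h12 e1 e2
  obtain ⟨w2, hw2l, hw2r, f2⟩ := rolleF _ _ _ _ _ _ _ h23 e2 e3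
  obtain ⟨w3, hw3l, hw3r, f3⟩ := rolleF _ _ _ _ _ _ _ h34 e3 e4
  obtain ⟨w4, hw4l, hw4r, f4⟩ := rolleF _ _ _ _ _ _ _ h45 e4 e5
  -- second derivative: 4 zeros
  obtain ⟨v0, hv0l, hv0r, g0⟩ := rolleF _ _ _ _ _ _ _ (hw0r.trans hw1l) f0 f1
  obtain ⟨v1, hv1l, hv1r, g1⟩ := rolleF _ _ _ _ _ _ _ (hw1r.trans hw2l) f1 f2
  obtain ⟨v2, hv2l, hv2r, g2⟩ := rolleF _ _ _ _ _ _ _ (hw2r.trans hw3l) f2 f3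
  obtain ⟨v3, hv3l, hv3r, g3⟩ := rolleF _ _ _ _ _ _ _ (hw3r.trans hw4l) f3 f4
  -- h := exp(-ax) * f'' ; its zeros are v0..v3
  set A1 := a*(a*c1 + -c4) + a*(-c4) with hA1
  set B1 := a*(a*(-c4)) with hB1
  set A2 := 2*a*(2*a*c2+c5) + 2*a*c5 with hA2
  set B2 := 2*a*(2*a*c5) with hB2
  have hfact : ∀ x : ℝ, F a 0 0 A1 B1 A2 B2 x = Real.exp (a*x) * F a A1 B1 A2 B2 0 0 x := by
    intro x
    simp only [F]
    rw [show (2:ℝ)*a*x = a*x + a*x by ring, Real.exp_add]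
    ring
  have hzero : ∀ x : ℝ, F a 0 0 A1 B1 A2 B2 x = 0 → F a A1 B1 A2 B2 0 0 x = 0 := by
    intro x hx
    rw [hfact x] at hx
    exact (mul_eq_zero.mp hx).resolve_left (Real.exp_ne_zero _)
  have k0 : F a A1 B1 A2 B2 0 0 v0 = 0 := hzero _ g0
  have k1 : F a A1 B1 A2 B2 0 0 v1 = 0 := hzero _ g1
  have k2 : F a A1 B1 A2 B2 0 0 v2 = 0 := hzero _ g2
  have k3 : F a A1 B1 A2 B2 0 0 v3 = 0 := hzero _ g3
  -- two more derivatives of h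
  obtain ⟨p0, hp0l, hp0r, m0⟩ := rolleF _ _ _ _ _ _ _ (hv0r.trans hv1l) k0 k1
  obtain ⟨p1, hp1l, hp1r, m1⟩ := rolleF _ _ _ _ _ _ _ (hv1r.trans hv2l) k1 k2
  obtain ⟨p2, hp2l, hp2r, m2⟩ := rolleF _ _ _ _ _ _ _ (hv2r.trans hv3l) k2 k3
  obtain ⟨q0, hq0l, hq0r, n0⟩ := rolleF _ _ _ _ _ _ _ (hp0r.trans hp1l) m0 m1
  obtain ⟨q1, hq1l, hq1r, n1⟩ := rolleF _ _ _ _ _ _ _ (hp1r.trans hp2l) m1 m2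
  have hq01 : q0 < q1 := hq0r.trans hq1l
  -- h'' = ((a*(a*A2+B2)+a*B2) + a*(a*B2)*x) * exp(a*x) has two zeros
  have expand : ∀ x : ℝ, F a 0 0 (a*(a*A2+B2)+a*B2) (a*(a*B2)) (2*a*(2*a*0+0)+2*a*0) (2*a*(2*a*0)) x
      = ((a*(a*A2+B2)+a*B2) + a*(a*B2)*x) * Real.exp (a*x) := by
    intro x; simp only [F]; ring
  rw [expand] at n0 n1
  have lin0 : (a*(a*A2+B2)+a*B2) + a*(a*B2)*q0 = 0 :=
    (mul_eq_zero.mp n0).resolve_right (Real.exp_ne_zero _)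
  have lin1 : (a*(a*A2+B2)+a*B2) + a*(a*B2)*q1 = 0 :=
    (mul_eq_zero.mp n1).resolve_right (Real.exp_ne_zero _)
  have hB2q : a*(a*B2) * (q1 - q0) = 0 := by linear_combination lin1 - lin0
  have hc5 : c5 = 0 := by
    rcases mul_eq_zero.mp hB2q with h | h
    · rw [hB2] at h
      have h' : (4:ℝ)*a^4*c5 = 0 := by linear_combination h
      exact (mul_eq_zero.mp h').resolve_left (by positivity)
    · exact absurd h (sub_ne_zero.mpr hq01.ne')
  have hc2 : c2 = 0 := by
    have hA2z : (4:ℝ)*a^4*c2 = 0 := by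
      rw [hA2, hB2, hc5] at lin0
      linear_combination lin0
    have : (4:ℝ)*a^4 ≠ 0 := by positivity
    exact (mul_eq_zero.mp hA2z).resolve_left this
  -- now h is linear: A1 + B1 x with zeros v0 v1
  have j0 : A1 + B1 * v0 = 0 := by
    rw [hA2, hB2, hc5, hc2] at k0
    simp only [F] at k0
    linear_combination k0
  have j1 : A1 + B1 * v1 = 0 := by
    rw [hA2, hB2, hc5, hc2] at k1
    simp only [F] at k1
    linear_combination k1
  have hv01 : v0 < v1 := hv0r.trans hv1l
  have hB1v : B1 * (v1 - v0) = 0 := by linear_combination j1 - j0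
  have hc4 : c4 = 0 := by
    rcases mul_eq_zero.mp hB1v with h | h
    · rw [hB1] at h
      have h' : a^2*c4 = 0 := by linear_combination -h
      exact (mul_eq_zero.mp h').resolve_left (by positivity)
    · exact absurd h (sub_ne_zero.mpr hv01.ne')
  have hc1 : c1 = 0 := by
    have hA1z : a^2*c1 = 0 := by
      rw [hA1, hB1, hc4] at j0
      linear_combination j0
    have : a^2 ≠ 0 := by positivity
    exact (mul_eq_zero.mp hA1z).resolve_left this
  -- f is linear: c0 + c3 x with zeros z0 z1
  have i0 : c0 + c3 * z0 = 0 := by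
    rw [hc1, hc2, hc4, hc5] at e0
    simp only [F] at e0
    linear_combination e0
  have i1 : c0 + c3 * z1 = 0 := by
    rw [hc1, hc2, hc4, hc5] at e1
    simp only [F] at e1
    linear_combination e1
  have hc3 : c3 = 0 := by
    have h : c3 * (z1 - z0) = 0 := by linear_combination i1 - i0
    rcases mul_eq_zero.mp h with h | h
    · exact h
    · exact absurd h (sub_ne_zero.mpr h01.ne')
  have hc0 : c0 = 0 := by rw [hc3] at i0; linarith
  exact ⟨hc0, hc1, hc2, hc3, hc4, hc5⟩




def lamN : Fin 6 → ℕ := ![0,1,2,0,1,2]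
def lamN' : Fin 6 → ℕ := ![0,0,1,1,2,2]
noncomputable def gfun : Fin 6 → ℝ → ℝ :=
  ![fun _ => 1, fun _ => 1, fun _ => 1, fun x => x, fun x => -x, fun x => x]

lemma S_lt (z : Fin 6 → ℝ) (hz : StrictMono z) (σ : Equiv.Perm (Fin 6)) (i0 : Fin 6)
    (hi0 : ¬ lamN (σ i0) = lamN' i0) :
    (∑ i, (lamN (σ i) : ℝ) * z i) < z 2 + z 3 + 2*z 4 + 2*z 5 := by
  rw [Fin.sum_univ_six]
  set m0 : ℝ := (lamN (σ 0) : ℝ) with hm0def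
  set m1 : ℝ := (lamN (σ 1) : ℝ) with hm1def
  set m2 : ℝ := (lamN (σ 2) : ℝ) with hm2def
  set m3 : ℝ := (lamN (σ 3) : ℝ) with hm3def
  set m4 : ℝ := (lamN (σ 4) : ℝ) with hm4def
  set m5 : ℝ := (lamN (σ 5) : ℝ) with hm5def
  have hle2N : ∀ r : Fin 6, lamN r ≤ 2 := by decide
  have h3dist : ∀ r s t : Fin 6, r ≠ s → r ≠ t → s ≠ t → lamN r + lamN s + lamN t ≤ 5 := by
    decide
  have htotN : lamN (σ 0) + lamN (σ 1) + lamN (σ 2) + lamN (σ 3) + lamN (σ 4) + lamN (σ 5) = 6 := by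
    have h := Equiv.sum_comp σ lamN
    rw [Fin.sum_univ_six, Fin.sum_univ_six] at h
    simpa [lamN] using h
  have htot : m0 + m1 + m2 + m3 + m4 + m5 = (6:ℝ) := by
    rw [hm0def, hm1def, hm2def, hm3def, hm4def, hm5def]
    exact_mod_cast htotN
  have h345 : m3 + m4 + m5 ≤ (5:ℝ) := by
    rw [hm3def, hm4def, hm5def]
    exact_mod_cast h3dist (σ 3) (σ 4) (σ 5)
      (σ.injective.ne (by decide)) (σ.injective.ne (by decide)) (σ.injective.ne (by decide))
  have hnn : ∀ i : Fin 6, (0:ℝ) ≤ (lamN (σ i) : ℝ) := fun i => Nat.cast_nonneg _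
  have hn0 : (0:ℝ) ≤ m0 := hnn 0
  have hn1 : (0:ℝ) ≤ m1 := hnn 1
  have hn2 : (0:ℝ) ≤ m2 := hnn 2
  have hn3 : (0:ℝ) ≤ m3 := hnn 3
  have hb4 : m4 ≤ (2:ℝ) := by rw [hm4def]; exact_mod_cast hle2N (σ 4)
  have hb5 : m5 ≤ (2:ℝ) := by rw [hm5def]; exact_mod_cast hle2N (σ 5)
  have g1 : (0:ℝ) < z 1 - z 0 := sub_pos.mpr (hz (by decide))
  have g2 : (0:ℝ) < z 2 - z 1 := sub_pos.mpr (hz (by decide))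
  have g3 : (0:ℝ) < z 3 - z 2 := sub_pos.mpr (hz (by decide))
  have g4 : (0:ℝ) < z 4 - z 3 := sub_pos.mpr (hz (by decide))
  have g5 : (0:ℝ) < z 5 - z 4 := sub_pos.mpr (hz (by decide))
  have hT3 : (0:ℝ) ≤ m0 + m1 + m2 - 1 := by linarith
  have hT4 : (0:ℝ) ≤ m0 + m1 + m2 + m3 - 2 := by linarith
  have hT5 : (0:ℝ) ≤ m0 + m1 + m2 + m3 + m4 - 4 := by linarith
  have h6 : (m0 + m1 + m2 + m3 + m4 + m5) * z 5 = 6 * z 5 := by rw [htot]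
  have hstrict : 0 < m0 ∨ 0 < m0 + m1 ∨ 0 < m0 + m1 + m2 - 1 ∨
      0 < m0 + m1 + m2 + m3 - 2 ∨ 0 < m0 + m1 + m2 + m3 + m4 - 4 := by
    by_contra hcon
    push_neg at hcon
    obtain ⟨t1, t2, t3, t4, t5⟩ := hcon
    have hm0 : m0 = 0 := le_antisymm t1 hn0
    have hm1 : m1 = 0 := by linarith
    have hm2 : m2 = 1 := by linarith
    have hm3 : m3 = 1 := by linarith
    have hm5' : m5 ≤ 2 := hb5
    have hm4 : m4 = 2 := by linarith
    have hm5 : m5 = 2 := by linarith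
    apply hi0
    have c0 : lamN (σ 0) = 0 := by rw [hm0def] at hm0; exact_mod_cast hm0
    have c1 : lamN (σ 1) = 0 := by rw [hm1def] at hm1; exact_mod_cast hm1
    have c2 : lamN (σ 2) = 1 := by rw [hm2def] at hm2; exact_mod_cast hm2
    have c3 : lamN (σ 3) = 1 := by rw [hm3def] at hm3; exact_mod_cast hm3
    have c4 : lamN (σ 4) = 2 := by rw [hm4def] at hm4; exact_mod_cast hm4
    have c5 : lamN (σ 5) = 2 := by rw [hm5def] at hm5; exact_mod_cast hm5
    fin_cases i0 <;> simp [lamN', c0, c1, c2, c3, c4, c5] <;> decide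
  rcases hstrict with h | h | h | h | h
  · linarith [mul_pos h g1, mul_nonneg (by linarith : (0:ℝ) ≤ m0 + m1) g2.le,
      mul_nonneg hT3 g3.le, mul_nonneg hT4 g4.le, mul_nonneg hT5 g5.le, h6]
  · linarith [mul_nonneg hn0 g1.le, mul_pos h g2,
      mul_nonneg hT3 g3.le, mul_nonneg hT4 g4.le, mul_nonneg hT5 g5.le, h6]
  · linarith [mul_nonneg hn0 g1.le, mul_nonneg (by linarith : (0:ℝ) ≤ m0 + m1) g2.le,
      mul_pos h g3, mul_nonneg hT4 g4.le, mul_nonneg hT5 g5.le, h6]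
  · linarith [mul_nonneg hn0 g1.le, mul_nonneg (by linarith : (0:ℝ) ≤ m0 + m1) g2.le,
      mul_nonneg hT3 g3.le, mul_pos h g4, mul_nonneg hT5 g5.le, h6]
  · linarith [mul_nonneg hn0 g1.le, mul_nonneg (by linarith : (0:ℝ) ≤ m0 + m1) g2.le,
      mul_nonneg hT3 g3.le, mul_nonneg hT4 g4.le, mul_pos h g5, h6]





noncomputable def uRow (a : ℝ) : Fin 6 → ℝ → ℝ :=
  ![fun _ => (1 : ℝ),
    fun x => Real.exp (a * x),
    fun x => Real.exp (2 * a * x),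
    fun x => x,
    fun x => -(x * Real.exp (a * x)),
    fun x => x * Real.exp (2 * a * x)]

noncomputable def Mmat (a : ℝ) (z : Fin 6 → ℝ) : Matrix (Fin 6) (Fin 6) ℝ :=
  Matrix.of fun i j => uRow a i (z j)

lemma uRow0 (a x : ℝ) : uRow a 0 x = 1 := rfl
lemma uRow1 (a x : ℝ) : uRow a 1 x = Real.exp (a * x) := rfl
lemma uRow2 (a x : ℝ) : uRow a 2 x = Real.exp (2 * a * x) := rfl
lemma uRow3 (a x : ℝ) : uRow a 3 x = x := rfl
lemma uRow4 (a x : ℝ) : uRow a 4 x = -(x * Real.exp (a * x)) := rfl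
lemma uRow5 (a x : ℝ) : uRow a 5 x = x * Real.exp (2 * a * x) := rfl


lemma uRow_eq (a : ℝ) (i : Fin 6) (x : ℝ) :
    uRow a i x = gfun i x * Real.exp ((lamN i : ℝ) * (a * x)) := by
  fin_cases i
  · show (1:ℝ) = 1 * Real.exp (((0:ℕ):ℝ) * (a*x)); norm_num
  · show Real.exp (a*x) = 1 * Real.exp (((1:ℕ):ℝ) * (a*x)); norm_num
  · show Real.exp (2*a*x) = 1 * Real.exp (((2:ℕ):ℝ) * (a*x))
    rw [one_mul]; congr 1; push_cast; ring
  · show x = x * Real.exp (((0:ℕ):ℝ) * (a*x)); norm_num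
  · show -(x * Real.exp (a*x)) = -x * Real.exp (((1:ℕ):ℝ) * (a*x)); norm_num
  · show x * Real.exp (2*a*x) = x * Real.exp (((2:ℕ):ℝ) * (a*x))
    congr 1; push_cast; ring

noncomputable def Gmat (z : Fin 6 → ℝ) : Matrix (Fin 6) (Fin 6) ℝ :=
  Matrix.of fun i j => if lamN i = lamN' j then gfun i (z j) else 0

lemma detG (z : Fin 6 → ℝ) :
    (Gmat z).det = (z 1 - z 0) * ((z 3 - z 2) * (z 5 - z 4)) := by
  have hGlit : Gmat z = !![1,1,0,0,0,0; 0,0,1,1,0,0; 0,0,0,0,1,1;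
      z 0, z 1,0,0,0,0; 0,0,-(z 2),-(z 3),0,0; 0,0,0,0,z 4,z 5] := by
    ext i j
    fin_cases i <;> fin_cases j <;> rfl
  rw [hGlit]
  set_option maxRecDepth 10000 in
  simp [Matrix.det_succ_row_zero, Fin.sum_univ_succ]
  simp [Fin.succAbove, Fin.lt_def]
  ring


lemma det_ne_zero (a : ℝ) (ha : 0 < a) (z : Fin 6 → ℝ) (hz : StrictMono z) :
    (Mmat a z).det ≠ 0 := by
  intro hdet
  have hdet' : (Matrix.transpose (Mmat a z)).det = 0 := by rwa [Matrix.det_transpose]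
  obtain ⟨v, hv0, hv⟩ := Matrix.exists_mulVec_eq_zero_iff.mpr hdet'
  have hF : ∀ j : Fin 6, F a (v 0) (v 3) (v 1) (-(v 4)) (v 2) (v 5) (z j) = 0 := by
    intro j
    have h := congrFun hv j
    simp only [Matrix.mulVec, dotProduct, Fin.sum_univ_six, Mmat,
      Matrix.transpose_apply, Matrix.of_apply, uRow0, uRow1, uRow2, uRow3, uRow4, uRow5,
      Pi.zero_apply] at h
    simp only [F]
    linear_combination h
  obtain ⟨h0, h1, h2, h3, h4, h5⟩ := indep a ha (v 0) (v 1) (v 2) (v 3) (v 4) (v 5)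
    (hz (show (0:Fin 6) < 1 by decide)) (hz (show (1:Fin 6) < 2 by decide))
    (hz (show (2:Fin 6) < 3 by decide)) (hz (show (3:Fin 6) < 4 by decide))
    (hz (show (4:Fin 6) < 5 by decide))
    (hF 0) (hF 1) (hF 2) (hF 3) (hF 4) (hF 5)
  apply hv0
  funext i
  fin_cases i <;> assumption

lemma tendsto_det (z : Fin 6 → ℝ) (hz : StrictMono z) :
    Filter.Tendsto
      (fun b : ℝ => (Mmat b z).det * Real.exp (-(b * (z 2 + z 3 + 2*z 4 + 2*z 5))))
      Filter.atTop (nhds ((z 1 - z 0) * ((z 3 - z 2) * (z 5 - z 4)))) := by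
  have key : ∀ b : ℝ,
      (Mmat b z).det * Real.exp (-(b * (z 2 + z 3 + 2*z 4 + 2*z 5)))
      = ∑ σ : Equiv.Perm (Fin 6), ((Equiv.Perm.sign σ : ℤ) : ℝ) *
          ((∏ i, gfun (σ i) (z i)) *
            Real.exp (b * ((∑ i, (lamN (σ i) : ℝ) * z i) - (z 2 + z 3 + 2*z 4 + 2*z 5)))) := by
    intro b
    rw [Matrix.det_apply', Finset.sum_mul]
    refine Finset.sum_congr rfl fun σ _ => ?_
    rw [mul_assoc]
    congr 1
    have hprod : ∏ i, Mmat b z (σ i) i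
        = (∏ i, gfun (σ i) (z i)) * Real.exp (b * (∑ i, (lamN (σ i) : ℝ) * z i)) := by
      calc ∏ i, Mmat b z (σ i) i
          = ∏ i, (gfun (σ i) (z i) * Real.exp ((lamN (σ i) : ℝ) * (b * z i))) :=
            Finset.prod_congr rfl fun i _ => uRow_eq b (σ i) (z i)
        _ = (∏ i, gfun (σ i) (z i)) * ∏ i, Real.exp ((lamN (σ i) : ℝ) * (b * z i)) :=
            Finset.prod_mul_distrib
        _ = (∏ i, gfun (σ i) (z i)) * Real.exp (∑ i, (lamN (σ i) : ℝ) * (b * z i)) := by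
            rw [Real.exp_sum]
        _ = (∏ i, gfun (σ i) (z i)) * Real.exp (b * (∑ i, (lamN (σ i) : ℝ) * z i)) := by
            rw [Finset.mul_sum]
            congr 2
            exact Finset.sum_congr rfl fun i _ => by ring
    rw [hprod, mul_assoc, ← Real.exp_add]
    congr 2
    ring
  have hval : (z 1 - z 0) * ((z 3 - z 2) * (z 5 - z 4))
      = ∑ σ : Equiv.Perm (Fin 6), ((Equiv.Perm.sign σ : ℤ) : ℝ) * ∏ i, Gmat z (σ i) i := by
    rw [← Matrix.det_apply', detG z]
  rw [hval]
  have main : Filter.Tendsto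
      (fun b : ℝ => ∑ σ : Equiv.Perm (Fin 6), ((Equiv.Perm.sign σ : ℤ) : ℝ) *
          ((∏ i, gfun (σ i) (z i)) *
            Real.exp (b * ((∑ i, (lamN (σ i) : ℝ) * z i) - (z 2 + z 3 + 2*z 4 + 2*z 5)))))
      Filter.atTop
      (nhds (∑ σ : Equiv.Perm (Fin 6), ((Equiv.Perm.sign σ : ℤ) : ℝ) * ∏ i, Gmat z (σ i) i)) := by
    apply tendsto_finset_sum
    intro σ _
    by_cases hσ : ∀ i, lamN (σ i) = lamN' i
    · have hS : (∑ i, (lamN (σ i) : ℝ) * z i) = z 2 + z 3 + 2*z 4 + 2*z 5 := by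
        have : ∀ i, ((lamN (σ i) : ℝ)) * z i = ((lamN' i : ℝ)) * z i := fun i => by rw [hσ i]
        rw [Finset.sum_congr rfl fun i _ => this i, Fin.sum_univ_six]
        show ((0:ℕ):ℝ) * z 0 + ((0:ℕ):ℝ) * z 1 + ((1:ℕ):ℝ) * z 2 + ((1:ℕ):ℝ) * z 3
            + ((2:ℕ):ℝ) * z 4 + ((2:ℕ):ℝ) * z 5 = z 2 + z 3 + 2*z 4 + 2*z 5
        push_cast
        ring
      have hPG : ∏ i, Gmat z (σ i) i = ∏ i, gfun (σ i) (z i) :=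
        Finset.prod_congr rfl fun i _ => by
          show (if lamN (σ i) = lamN' i then gfun (σ i) (z i) else 0) = gfun (σ i) (z i)
          rw [if_pos (hσ i)]
      rw [hS, hPG]
      simp only [sub_self, mul_zero, Real.exp_zero, mul_one]
      exact tendsto_const_nhds
    · obtain ⟨i0, hi0⟩ := not_forall.mp hσ
      have hPG : ∏ i, Gmat z (σ i) i = 0 :=
        Finset.prod_eq_zero (Finset.mem_univ i0) (by
          show (if lamN (σ i0) = lamN' i0 then gfun (σ i0) (z i0) else 0) = 0
          rw [if_neg hi0])
      rw [hPG, mul_zero]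
      have hS : (∑ i, (lamN (σ i) : ℝ) * z i) < z 2 + z 3 + 2*z 4 + 2*z 5 :=
        S_lt z hz σ i0 hi0
      have h1 : Filter.Tendsto
          (fun b : ℝ => b * ((∑ i, (lamN (σ i) : ℝ) * z i) - (z 2 + z 3 + 2*z 4 + 2*z 5)))
          Filter.atTop Filter.atBot :=
        Filter.Tendsto.atTop_mul_const_of_neg (by linarith) tendsto_id
      have h2 := Real.tendsto_exp_atBot.comp h1
      have h3 := h2.const_mul (((Equiv.Perm.sign σ : ℤ) : ℝ) * (∏ i, gfun (σ i) (z i)))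
      rw [mul_zero] at h3
      refine h3.congr fun b => ?_
      simp only [Function.comp]
      ring
  exact main.congr fun b => (key b).symm

lemma continuous_det (z : Fin 6 → ℝ) : Continuous fun b : ℝ => (Mmat b z).det := by
  apply Continuous.matrix_det
  apply continuous_matrix
  intro i j
  fin_cases i
  · exact continuous_const
  · show Continuous fun b : ℝ => Real.exp (b * z j); fun_prop
  · show Continuous fun b : ℝ => Real.exp (2 * b * z j); fun_prop
  · exact continuous_const
  · show Continuous fun b : ℝ => -(z j * Real.exp (b * z j)); fun_prop
  · show Continuous fun b : ℝ => z j * Real.exp (2 * b * z j); fun_prop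

lemma det_pos (a : ℝ) (ha : 0 < a) (z : Fin 6 → ℝ) (hz : StrictMono z) :
    0 < (Mmat a z).det := by
  have hLpos : 0 < (z 1 - z 0) * ((z 3 - z 2) * (z 5 - z 4)) := by
    have g1 : z 0 < z 1 := hz (by decide)
    have g3 : z 2 < z 3 := hz (by decide)
    have g5 : z 4 < z 5 := hz (by decide)
    have := mul_pos (sub_pos.mpr g3) (sub_pos.mpr g5)
    exact mul_pos (sub_pos.mpr g1) this
  have htend := tendsto_det z hz
  have hev : ∀ᶠ b in Filter.atTop, 0 < (Mmat b z).det := by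
    have h1 := htend.eventually_const_lt hLpos
    filter_upwards [h1] with b hb
    have hexp : (0:ℝ) < Real.exp (-(b * (z 2 + z 3 + 2*z 4 + 2*z 5))) := Real.exp_pos _
    nlinarith [Real.exp_pos (-(b * (z 2 + z 3 + 2*z 4 + 2*z 5)))]
  obtain ⟨b0, hb0pos, hab0⟩ := (hev.and (Filter.eventually_ge_atTop a)).exists
  rcases lt_trichotomy ((Mmat a z).det) 0 with hneg | h0 | hpos
  · exfalso
    have hiv := intermediate_value_Icc hab0 ((continuous_det z).continuousOn)
    have h0mem : (0:ℝ) ∈ Set.Icc ((Mmat a z).det) ((Mmat b0 z).det) := ⟨hneg.le, hb0pos.le⟩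
    obtain ⟨c, hc, hc0⟩ := hiv h0mem
    exact det_ne_zero c (lt_of_lt_of_le ha hc.1) z hz hc0
  · exact absurd h0 (det_ne_zero a ha z hz)
  · exact hpos

end Cheb8

/-- For `a > 0`, `{1, e^{ax}, e^{2ax}, x, -x e^{ax}, x e^{2ax}}` is a Chebyshev system
on any interval `[A,B]`. -/
theorem stmt_8 (a : ℝ) (ha : 0 < a) (A B : ℝ) (z : Fin 6 → ℝ)
    (hz : StrictMono z) (hmem : ∀ i, z i ∈ Set.Icc A B) :
    0 < (Matrix.of fun i j =>
      (![fun _ => (1 : ℝ),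
         fun x => Real.exp (a * x),
         fun x => Real.exp (2 * a * x),
         fun x => x,
         fun x => -(x * Real.exp (a * x)),
         fun x => x * Real.exp (2 * a * x)] : Fin 6 → ℝ → ℝ) i (z j)).det := by
  convert Cheb8.det_pos a ha z hz using 2
  rfl
end

section
/- For λ > 0 and c > 0, the 2×2 symmetric matrix M(c) with entries M_{11} = 2λ/((λ+2)c³), M_{12} = M_{21} = (λ+1)/(2(λ+2)c²), M_{22} = 2/c is positive definite if and only if 15λ² + 30λ − 1 > 0. -/
theorem stmt_9 (l c : ℝ) (hl : 0 < l) (hc : 0 < c) :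
    (Matrix.PosDef
      (!![2 * l / ((l + 2) * c ^ 3), (l + 1) / (2 * (l + 2) * c ^ 2);
          (l + 1) / (2 * (l + 2) * c ^ 2), 2 / c]))
      ↔ 15 * l ^ 2 + 30 * l - 1 > 0 := by
  have hl2 : 0 < l + 2 := by linarith
  have hc3 : 0 < c ^ 3 := by positivity
  have hc4 : 0 < c ^ 4 := by positivity
  have hc2 : 0 < c ^ 2 := by positivity
  constructor
  · intro h
    have hd := h.det_pos
    rw [Matrix.det_fin_two_of] at hd
    have key : (2 * l / ((l + 2) * c ^ 3)) * (2 / c) -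
        ((l + 1) / (2 * (l + 2) * c ^ 2)) * ((l + 1) / (2 * (l + 2) * c ^ 2))
        = (15 * l ^ 2 + 30 * l - 1) / (4 * (l + 2) ^ 2 * c ^ 4) := by
      field_simp
      ring
    rw [key] at hd
    have := (div_pos_iff.mp hd)
    rcases this with ⟨h1, _⟩ | ⟨_, h2⟩
    · linarith
    · nlinarith
  · intro h
    constructor
    · ext i j
      fin_cases i <;> fin_cases j <;> simp [Matrix.conjTranspose, Matrix.vecHead, Matrix.vecTail]
    · intro x hx
      have hx2 : x 0 ≠ 0 ∨ x 1 ≠ 0 := by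
        by_contra hcon
        push_neg at hcon
        apply hx
        ext i
        fin_cases i <;> simp [hcon.1, hcon.2]
      have expand : (x.sum fun i xi ↦ x.sum fun j xj ↦ star xi *
          (!![2 * l / ((l + 2) * c ^ 3), (l + 1) / (2 * (l + 2) * c ^ 2);
          (l + 1) / (2 * (l + 2) * c ^ 2), 2 / c]) i j * xj)
          = (2 * l / ((l + 2) * c ^ 3)) * (x 0) ^ 2
            + 2 * ((l + 1) / (2 * (l + 2) * c ^ 2)) * (x 0) * (x 1)
            + (2 / c) * (x 1) ^ 2 := by
        simp [Finsupp.sum_fintype, Fin.sum_univ_two]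
        ring
      rw [expand]
      set a := 2 * l / ((l + 2) * c ^ 3) with ha
      set b := (l + 1) / (2 * (l + 2) * c ^ 2) with hb
      set d := 2 / c with hd
      have hapos : 0 < a := by rw [ha]; positivity
      have hdet : 0 < a * d - b * b := by
        have : a * d - b * b = (15 * l ^ 2 + 30 * l - 1) / (4 * (l + 2) ^ 2 * c ^ 4) := by
          rw [ha, hb, hd]; field_simp; ring
        rw [this]; positivity
      have key : a * (a * (x 0) ^ 2 + 2 * b * (x 0) * (x 1) + d * (x 1) ^ 2)
          = (a * x 0 + b * x 1) ^ 2 + (a * d - b * b) * (x 1) ^ 2 := by ring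
      rcases hx2 with h0 | h1
      · rcases eq_or_ne (x 1) 0 with h1 | h1
        · have : 0 < a * (x 0) ^ 2 := by positivity
          simp [h1]
          nlinarith
        · have hpos : 0 < (a * x 0 + b * x 1) ^ 2 + (a * d - b * b) * (x 1) ^ 2 := by
            have : 0 < (a * d - b * b) * (x 1) ^ 2 := by positivity
            nlinarith [sq_nonneg (a * x 0 + b * x 1)]
          nlinarith
      · have hpos : 0 < (a * x 0 + b * x 1) ^ 2 + (a * d - b * b) * (x 1) ^ 2 := by
          have : 0 < (a * d - b * b) * (x 1) ^ 2 := by positivity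
          nlinarith [sq_nonneg (a * x 0 + b * x 1)]
        nlinarith
end

section
/- For λ > 0 and c > 0, the 3×3 symmetric matrix N(c) with entries N_{11} = 2λ/((λ+4)c⁵), N_{12} = (λ+1)/(8(λ+4)c⁴), N_{13} = (λ+2)/(18(λ+4)c³), N_{22} = (λ+2)/(18(λ+4)c³), N_{23} = (λ+3)/(8(λ+4)c²), N_{33} = 2/c is positive definite if and only if all of the following hold: 1505λ³ + 9030λ² + 11499λ − 1082 > 0, 55λ² + 110λ − 9 > 0, 1295λ² + 5180λ − 4 > 0, and 55λ² + 330λ + 431 > 0. -/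
open Matrix

private lemma pos_cancel {K Q : ℝ} (hK : 0 < K) (h : 0 < K * Q) : 0 < Q := by
  by_contra hq
  push_neg at hq
  nlinarith

private lemma pos_of_mul_eq {a S b : ℝ} (hS : 0 < S) (h : a * S = b) (ha : 0 < a) :
    0 < b := h ▸ mul_pos ha hS

/-- Core algebraic lemma: positivity of the quadratic form of the constant matrix. -/
private lemma quad_pos (l : ℝ) (hl : 0 < l)
    (h1 : 1505 * l ^ 3 + 9030 * l ^ 2 + 11499 * l - 1082 > 0)
    (h2 : 55 * l ^ 2 + 110 * l - 9 > 0)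
    (u v w : ℝ) (h : ¬(u = 0 ∧ v = 0 ∧ w = 0)) :
    0 < 2*l*u^2 + (l+1)/4*(u*v) + (l+2)/9*(u*w) + (l+2)/18*v^2 + (l+3)/4*(v*w)
        + 2*(l+4)*w^2 := by
  set Q := 2*l*u^2 + (l+1)/4*(u*v) + (l+2)/9*(u*w) + (l+2)/18*v^2 + (l+3)/4*(v*w)
        + 2*(l+4)*w^2 with hQ
  have hp2 : (0:ℝ) < 55 * l ^ 2 + 110 * l - 9 := h2
  have hK : 0 < 2*l*(55 * l ^ 2 + 110 * l - 9) := by nlinarith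
  apply pos_cancel hK
  have key : 2*l*(55 * l ^ 2 + 110 * l - 9) * Q =
      (55 * l ^ 2 + 110 * l - 9) * (2*l*u + (l+1)/8*v + (l+2)/18*w)^2
      + 576 * ((55 * l ^ 2 + 110 * l - 9)/576*v
          + (2*l*((l+3)/8) - (l+1)/8*((l+2)/18))*w)^2
      + 576 * (2*l) * (5*(1505 * l ^ 3 + 9030 * l ^ 2 + 11499 * l - 1082)/46656) * w^2 := by
    rw [hQ]; ring
  rw [key]
  have t1 : 0 ≤ (55 * l ^ 2 + 110 * l - 9) * (2*l*u + (l+1)/8*v + (l+2)/18*w)^2 :=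
    mul_nonneg hp2.le (sq_nonneg _)
  have t2 : 0 ≤ 576 * ((55 * l ^ 2 + 110 * l - 9)/576*v
          + (2*l*((l+3)/8) - (l+1)/8*((l+2)/18))*w)^2 := by positivity
  have hc3 : (0:ℝ) < 576 * (2*l) * (5*(1505 * l ^ 3 + 9030 * l ^ 2 + 11499 * l - 1082)/46656) := by
    nlinarith [mul_pos hl h1]
  have t3 : 0 ≤ 576 * (2*l) * (5*(1505 * l ^ 3 + 9030 * l ^ 2 + 11499 * l - 1082)/46656) * w^2 :=
    mul_nonneg hc3.le (sq_nonneg w)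
  by_cases hw : w = 0
  · subst hw
    by_cases hv : v = 0
    · subst hv
      have hu : u ≠ 0 := by tauto
      have ht : 0 < (55 * l ^ 2 + 110 * l - 9) * (2*l*u + (l+1)/8*0 + (l+2)/18*0)^2 := by
        apply mul_pos hp2
        have h2l : 2*l*u + (l+1)/8*0 + (l+2)/18*0 ≠ 0 := by
          simp only [mul_zero, add_zero]
          exact mul_ne_zero (by positivity) hu
        positivity
      linarith
    · have ht : 0 < 576 * ((55 * l ^ 2 + 110 * l - 9)/576*v
          + (2*l*((l+3)/8) - (l+1)/8*((l+2)/18))*0)^2 := by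
        have hne : (55 * l ^ 2 + 110 * l - 9)/576*v
          + (2*l*((l+3)/8) - (l+1)/8*((l+2)/18))*0 ≠ 0 := by
          simp only [mul_zero, add_zero]
          exact mul_ne_zero (by positivity) hv
        positivity
      linarith
  · have ht : 0 < 576 * (2*l) * (5*(1505 * l ^ 3 + 9030 * l ^ 2 + 11499 * l - 1082)/46656) * w^2 :=
      mul_pos hc3 (by positivity)
    linarith

set_option maxHeartbeats 1600000 in
theorem stmt_13 (l c : ℝ) (hl : 0 < l) (hc : 0 < c) :
    (Matrix.PosDef
      (!![2 * l / ((l + 4) * c ^ 5), (l + 1) / (8 * (l + 4) * c ^ 4),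
            (l + 2) / (18 * (l + 4) * c ^ 3);
          (l + 1) / (8 * (l + 4) * c ^ 4), (l + 2) / (18 * (l + 4) * c ^ 3),
            (l + 3) / (8 * (l + 4) * c ^ 2);
          (l + 2) / (18 * (l + 4) * c ^ 3), (l + 3) / (8 * (l + 4) * c ^ 2),
            2 / c]))
      ↔ (1505 * l ^ 3 + 9030 * l ^ 2 + 11499 * l - 1082 > 0 ∧
         55 * l ^ 2 + 110 * l - 9 > 0 ∧
         1295 * l ^ 2 + 5180 * l - 4 > 0 ∧
         55 * l ^ 2 + 330 * l + 431 > 0) := by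
  have hl4 : (0:ℝ) < l + 4 := by linarith
  have hl4' : (l:ℝ) + 4 ≠ 0 := hl4.ne'
  have hc' : c ≠ 0 := hc.ne'
  have hl2 : (0:ℝ) < l + 2 := by linarith
  constructor
  · intro h
    refine ⟨?_, ?_, ?_, ?_⟩
    · -- determinant
      have hd := h.det_pos
      rw [Matrix.det_fin_three] at hd
      simp at hd
      rw [← sub_pos] at hd
      have := pos_of_mul_eq (show (0:ℝ) < (l+4)^3 * c^9 * (46656/5) by positivity)
        (show _ = 1505 * l ^ 3 + 9030 * l ^ 2 + 11499 * l - 1082 from by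
          field_simp
          ring) hd
      linarith
    · -- leading 2x2 minor
      have hx : (![-(l+1)/8, 2*l/c, 0] : Fin 3 → ℝ) ≠ 0 := by
        intro hx0
        have := congrFun hx0 1
        simp at this
        rcases this with h' | h' <;> [linarith; exact hc' h']
      have hq := h.dotProduct_mulVec_pos hx
      simp [Matrix.mulVec, dotProduct, Fin.sum_univ_three] at hq
      have := pos_of_mul_eq (show (0:ℝ) < (l+4) * c^5 * (288/l) by positivity)
        (show _ = 55 * l ^ 2 + 110 * l - 9 from by field_simp; ring) hq
      linarith
    · -- {1,3} minor
      have hx : (![-(l+2)/18, 0, 2*l/c^2] : Fin 3 → ℝ) ≠ 0 := by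
        intro hx0
        have := congrFun hx0 2
        simp at this
        rcases this with h' | h' <;> [linarith; exact hc' h']
      have hq := h.dotProduct_mulVec_pos hx
      simp [Matrix.mulVec, dotProduct, Fin.sum_univ_three] at hq
      have := pos_of_mul_eq (show (0:ℝ) < (l+4) * c^5 * (162/l) by positivity)
        (show _ = 1295 * l ^ 2 + 5180 * l - 4 from by field_simp; ring) hq
      linarith
    · -- {2,3} minor
      have hx : (![0, -(l+3)/(8*c), (l+2)/(18*c^2)] : Fin 3 → ℝ) ≠ 0 := by
        intro hx0
        have := congrFun hx0 2
        simp at this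
        rcases this with h' | h' <;> [linarith; exact hc' h']
      have hq := h.dotProduct_mulVec_pos hx
      simp [Matrix.mulVec, dotProduct, Fin.sum_univ_three] at hq
      have := pos_of_mul_eq
        (show (0:ℝ) < (l+4) * c^5 * (10368/(l+2)) by positivity)
        (show _ = 55 * l ^ 2 + 330 * l + 431 from by field_simp; ring) hq
      linarith
  · rintro ⟨h1, h2, h3, h4⟩
    refine Matrix.PosDef.of_dotProduct_mulVec_pos ?_ ?_
    · -- Hermitian
      ext i j
      fin_cases i <;> fin_cases j <;> simp [Matrix.conjTranspose_apply]
    · intro x hx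
      simp only [star_trivial]
      simp [Matrix.mulVec, dotProduct, Fin.sum_univ_three]
      have hne : ¬(x 0 = 0 ∧ c * x 1 = 0 ∧ c^2 * x 2 = 0) := by
        rintro ⟨hu, hv, hw⟩
        apply hx
        ext i
        fin_cases i
        · exact hu
        · simpa [hc'] using hv
        · rcases mul_eq_zero.mp hw with h' | h'
          · exact absurd h' (by positivity)
          · exact h'
      have hq := quad_pos l hl h1 h2 (x 0) (c * x 1) (c^2 * x 2) hne
      apply pos_cancel (show (0:ℝ) < (l+4) * c^5 by positivity)
      have heq : (l+4) * c^5 *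
          (x 0 * (2 * l / ((l + 4) * c ^ 5) * x 0 + (l + 1) / (8 * (l + 4) * c ^ 4) * x 1 +
              (l + 2) / (18 * (l + 4) * c ^ 3) * x 2) +
           x 1 * ((l + 1) / (8 * (l + 4) * c ^ 4) * x 0 + (l + 2) / (18 * (l + 4) * c ^ 3) * x 1 +
              (l + 3) / (8 * (l + 4) * c ^ 2) * x 2) +
           x 2 * ((l + 2) / (18 * (l + 4) * c ^ 3) * x 0 + (l + 3) / (8 * (l + 4) * c ^ 2) * x 1 +
              2 / c * x 2)) =
          2*l*(x 0)^2 + (l+1)/4*((x 0)*(c * x 1)) + (l+2)/9*((x 0)*(c^2 * x 2))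
            + (l+2)/18*(c * x 1)^2 + (l+3)/4*((c * x 1)*(c^2 * x 2)) + 2*(l+4)*(c^2 * x 2)^2 := by
        field_simp
        ring
      rw [heq]
      exact hq
end

section
/- Let λ > 0 and define Ψ_1(c) = c^λ, Ψ_2(c) = log(c)·c^λ, Ψ_3(c) = c^{λ+1}, Ψ_4(c) = log(c)·c^{λ+1}, Ψ_5(c) = c^{λ+2}, Ψ_6(c) = log(c)·c^{λ+2} on (0,∞). Then the iterated divided derivatives satisfy f_{1,1}(c) = λc^{λ−1}, f_{2,2}(c) = 1/c, f_{3,3}(c) = (λ+1)/λ, f_{4,4}(c) = 1/c, f_{5,5}(c) = 4(λ+2)/(λ+1), and f_{6,6}(c) = 1/c. -/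
private lemma uniq_deriv {F G : ℝ → ℝ} {c d d' : ℝ} (hc : 0 < c)
    (heq : ∀ x : ℝ, 0 < x → F x = G x)
    (hF : HasDerivAt F d c) (hG : HasDerivAt G d' c) : d = d' := by
  have hev : G =ᶠ[nhds c] F :=
    Filter.eventuallyEq_of_mem (isOpen_Ioi.mem_nhds hc) fun x hx => (heq x hx).symm
  exact (hF.congr_of_eventuallyEq hev).unique hG

/-- Iterated divided-derivative computations for the two-term exponential regression
model: `Ψ_1 = c^λ, Ψ_2 = log(c) c^λ, …` on `(0, ∞)`. -/
theorem stmt_14 (lam : ℝ) (hlam : 0 < lam) (Ψ : ℕ → ℝ → ℝ)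
    (hΨ1 : ∀ c : ℝ, 0 < c → Ψ 1 c = c ^ lam)
    (hΨ2 : ∀ c : ℝ, 0 < c → Ψ 2 c = Real.log c * c ^ lam)
    (hΨ3 : ∀ c : ℝ, 0 < c → Ψ 3 c = c ^ (lam + 1))
    (hΨ4 : ∀ c : ℝ, 0 < c → Ψ 4 c = Real.log c * c ^ (lam + 1))
    (hΨ5 : ∀ c : ℝ, 0 < c → Ψ 5 c = c ^ (lam + 2))
    (hΨ6 : ∀ c : ℝ, 0 < c → Ψ 6 c = Real.log c * c ^ (lam + 2))
    (f : ℕ → ℕ → ℝ → ℝ)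
    (hf1 : ∀ l, 1 ≤ l → l ≤ 6 → ∀ c : ℝ, 0 < c → HasDerivAt (Ψ l) (f l 1 c) c)
    (hft : ∀ t l, 2 ≤ t → t ≤ l → l ≤ 6 → ∀ c : ℝ, 0 < c →
      HasDerivAt (fun x => f l (t - 1) x / f (t - 1) (t - 1) x) (f l t c) c) :
    ∀ c : ℝ, 0 < c →
      f 1 1 c = lam * c ^ (lam - 1) ∧
      f 2 2 c = 1 / c ∧
      f 3 3 c = (lam + 1) / lam ∧
      f 4 4 c = 1 / c ∧
      f 5 5 c = 4 * (lam + 2) / (lam + 1) ∧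
      f 6 6 c = 1 / c := by
  have hl0 : lam ≠ 0 := hlam.ne'
  have hl1 : lam + 1 ≠ 0 := by positivity
  have hl2 : lam + 2 ≠ 0 := by positivity
  -- level 1 : derivatives of the Ψ's
  have hf11 : ∀ x : ℝ, 0 < x → f 1 1 x = lam * x ^ (lam - 1) := by
    intro c hc
    exact uniq_deriv hc (fun x hx => hΨ1 x hx) (hf1 1 le_rfl (by norm_num) c hc)
      (Real.hasDerivAt_rpow_const (Or.inl hc.ne'))
  have hf21 : ∀ x : ℝ, 0 < x → f 2 1 x = x ^ (lam - 1) * (1 + lam * Real.log x) := by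
    intro c hc
    refine uniq_deriv hc (fun x hx => hΨ2 x hx) (hf1 2 (by norm_num) (by norm_num) c hc) ?_
    have h := (Real.hasDerivAt_log hc.ne').mul
      (Real.hasDerivAt_rpow_const (p := lam) (Or.inl hc.ne'))
    convert h using 1; (rfl; rfl; rfl)
    have e1 : c ^ lam = c ^ (lam - 1) * c := by
      rw [← Real.rpow_add_one hc.ne']; ring_nf
    rw [e1]
    field_simp <;> first | ring1 | tauto
  have hf31 : ∀ x : ℝ, 0 < x → f 3 1 x = (lam + 1) * x ^ lam := by
    intro c hc
    refine uniq_deriv hc (fun x hx => hΨ3 x hx) (hf1 3 (by norm_num) (by norm_num) c hc) ?_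
    have h := Real.hasDerivAt_rpow_const (p := lam + 1) (x := c) (Or.inl hc.ne')
    have e : lam + 1 - 1 = lam := by ring
    rwa [e] at h
  have hf41 : ∀ x : ℝ, 0 < x → f 4 1 x = x ^ lam * (1 + (lam + 1) * Real.log x) := by
    intro c hc
    refine uniq_deriv hc (fun x hx => hΨ4 x hx) (hf1 4 (by norm_num) (by norm_num) c hc) ?_
    have h := (Real.hasDerivAt_log hc.ne').mul
      (Real.hasDerivAt_rpow_const (p := lam + 1) (Or.inl hc.ne'))
    convert h using 1; (rfl; rfl; rfl)
    have e : lam + 1 - 1 = lam := by ring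
    rw [e]
    have e1 : c ^ (lam + 1) = c ^ lam * c := Real.rpow_add_one hc.ne' lam
    rw [e1]
    field_simp <;> first | ring1 | tauto
  have hf51 : ∀ x : ℝ, 0 < x → f 5 1 x = (lam + 2) * x ^ (lam + 1) := by
    intro c hc
    refine uniq_deriv hc (fun x hx => hΨ5 x hx) (hf1 5 (by norm_num) (by norm_num) c hc) ?_
    have h := Real.hasDerivAt_rpow_const (p := lam + 2) (x := c) (Or.inl hc.ne')
    have e : lam + 2 - 1 = lam + 1 := by ring
    rwa [e] at h
  have hf61 : ∀ x : ℝ, 0 < x → f 6 1 x = x ^ (lam + 1) * (1 + (lam + 2) * Real.log x) := by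
    intro c hc
    refine uniq_deriv hc (fun x hx => hΨ6 x hx) (hf1 6 (by norm_num) (by norm_num) c hc) ?_
    have h := (Real.hasDerivAt_log hc.ne').mul
      (Real.hasDerivAt_rpow_const (p := lam + 2) (Or.inl hc.ne'))
    convert h using 1; (rfl; rfl; rfl)
    have e : lam + 2 - 1 = lam + 1 := by ring
    rw [e]
    have e1 : c ^ (lam + 2) = c ^ (lam + 1) * c := by
      rw [← Real.rpow_add_one hc.ne']; ring_nf
    rw [e1]
    field_simp <;> first | ring1 | tauto
  -- level 2 : dividing by f 1 1
  have hf22 : ∀ x : ℝ, 0 < x → f 2 2 x = x⁻¹ := by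
    intro c hc
    refine uniq_deriv hc (fun x hx => ?_) (hft 2 2 le_rfl le_rfl (by norm_num) c hc)
      (G := fun x => lam⁻¹ + Real.log x) ((Real.hasDerivAt_log hc.ne').const_add lam⁻¹)
    have hp : x ^ (lam - 1) ≠ 0 := (Real.rpow_pos_of_pos hx _).ne'
    rw [show (2 : ℕ) - 1 = 1 from rfl, hf21 x hx, hf11 x hx]
    field_simp <;> first | ring1 | tauto
  have hf32 : ∀ x : ℝ, 0 < x → f 3 2 x = (lam + 1) / lam := by
    intro c hc
    refine uniq_deriv hc (fun x hx => ?_) (hft 2 3 le_rfl (by norm_num) (by norm_num) c hc)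
      (G := fun x => (lam + 1) / lam * x)
      (by simpa using (hasDerivAt_id' (x := c)).const_mul ((lam + 1) / lam))
    have hp : x ^ (lam - 1) ≠ 0 := (Real.rpow_pos_of_pos hx _).ne'
    have e1 : x ^ lam = x ^ (lam - 1) * x := by
      rw [← Real.rpow_add_one hx.ne']; ring_nf
    rw [show (2 : ℕ) - 1 = 1 from rfl, hf31 x hx, hf11 x hx, e1]
    field_simp <;> first | ring1 | tauto
  have hf42 : ∀ x : ℝ, 0 < x →
      f 4 2 x = lam⁻¹ * (1 + (lam + 1) * (Real.log x + 1)) := by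
    intro c hc
    refine uniq_deriv hc (fun x hx => ?_) (hft 2 4 le_rfl (by norm_num) (by norm_num) c hc)
      (G := fun x => lam⁻¹ * (x + (lam + 1) * (x * Real.log x))) ?_
    · have hp : x ^ (lam - 1) ≠ 0 := (Real.rpow_pos_of_pos hx _).ne'
      have e1 : x ^ lam = x ^ (lam - 1) * x := by
        rw [← Real.rpow_add_one hx.ne']; ring_nf
      rw [show (2 : ℕ) - 1 = 1 from rfl, hf41 x hx, hf11 x hx, e1]
      field_simp <;> first | ring1 | tauto
    · have h := ((hasDerivAt_id' (x := c)).add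
        (((hasDerivAt_id' (x := c)).mul (Real.hasDerivAt_log hc.ne')).const_mul
          (lam + 1))).const_mul lam⁻¹
      convert h using 1; (rfl; rfl; rfl)
      field_simp <;> first | ring1 | tauto
  have hf52 : ∀ x : ℝ, 0 < x → f 5 2 x = 2 * (lam + 2) / lam * x := by
    intro c hc
    refine uniq_deriv hc (fun x hx => ?_) (hft 2 5 le_rfl (by norm_num) (by norm_num) c hc)
      (G := fun x => (lam + 2) / lam * (x * x)) ?_
    · have hp : x ^ (lam - 1) ≠ 0 := (Real.rpow_pos_of_pos hx _).ne'
      have e2 : x ^ (lam + 1) = x ^ (lam - 1) * x * x := by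
        rw [← Real.rpow_add_one hx.ne', ← Real.rpow_add_one hx.ne']; ring_nf
      rw [show (2 : ℕ) - 1 = 1 from rfl, hf51 x hx, hf11 x hx, e2]
      field_simp <;> first | ring1 | tauto
    · have h := ((hasDerivAt_id' (x := c)).mul (hasDerivAt_id' (x := c))).const_mul
        ((lam + 2) / lam)
      convert h using 1; (rfl; rfl; rfl)
      ring
  have hf62 : ∀ x : ℝ, 0 < x →
      f 6 2 x = lam⁻¹ * (2 * x + (lam + 2) * (2 * x * Real.log x + x)) := by
    intro c hc
    refine uniq_deriv hc (fun x hx => ?_) (hft 2 6 le_rfl (by norm_num) (by norm_num) c hc)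
      (G := fun x => lam⁻¹ * (x * x + (lam + 2) * (x * x * Real.log x))) ?_
    · have hp : x ^ (lam - 1) ≠ 0 := (Real.rpow_pos_of_pos hx _).ne'
      have e2 : x ^ (lam + 1) = x ^ (lam - 1) * x * x := by
        rw [← Real.rpow_add_one hx.ne', ← Real.rpow_add_one hx.ne']; ring_nf
      rw [show (2 : ℕ) - 1 = 1 from rfl, hf61 x hx, hf11 x hx, e2]
      field_simp <;> first | ring1 | tauto
    · have h := (((hasDerivAt_id' (x := c)).mul (hasDerivAt_id' (x := c))).add
        ((((hasDerivAt_id' (x := c)).mul (hasDerivAt_id' (x := c))).mul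
          (Real.hasDerivAt_log hc.ne')).const_mul (lam + 2))).const_mul lam⁻¹
      convert h using 1; (rfl; rfl; rfl)
      simp only [Pi.mul_apply]
      field_simp <;> first | ring1 | tauto
  -- level 3 : dividing by f 2 2 (= x⁻¹)
  have hf33 : ∀ x : ℝ, 0 < x → f 3 3 x = (lam + 1) / lam := by
    intro c hc
    refine uniq_deriv hc (fun x hx => ?_) (hft 3 3 (by norm_num) le_rfl (by norm_num) c hc)
      (G := fun x => (lam + 1) / lam * x)
      (by simpa using (hasDerivAt_id' (x := c)).const_mul ((lam + 1) / lam))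
    rw [show (3 : ℕ) - 1 = 2 from rfl, hf32 x hx, hf22 x hx]
    field_simp <;> first | ring1 | tauto
  have hf43 : ∀ x : ℝ, 0 < x →
      f 4 3 x = lam⁻¹ * (1 + (lam + 1) * (Real.log x + 2)) := by
    intro c hc
    refine uniq_deriv hc (fun x hx => ?_) (hft 3 4 (by norm_num) (by norm_num) (by norm_num) c hc)
      (G := fun x => lam⁻¹ * (x + (lam + 1) * (x * Real.log x + x))) ?_
    · rw [show (3 : ℕ) - 1 = 2 from rfl, hf42 x hx, hf22 x hx]
      field_simp <;> first | ring1 | tauto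
    · have h := ((hasDerivAt_id' (x := c)).add
        ((((hasDerivAt_id' (x := c)).mul (Real.hasDerivAt_log hc.ne')).add
          (hasDerivAt_id' (x := c))).const_mul (lam + 1))).const_mul lam⁻¹
      convert h using 1; (rfl; rfl; rfl)
      simp only [mul_inv_cancel₀ hc.ne', mul_inv_cancel_right₀ hc.ne']; ring
  have hf53 : ∀ x : ℝ, 0 < x → f 5 3 x = 4 * (lam + 2) / lam * x := by
    intro c hc
    refine uniq_deriv hc (fun x hx => ?_) (hft 3 5 (by norm_num) (by norm_num) (by norm_num) c hc)
      (G := fun x => 2 * (lam + 2) / lam * (x * x)) ?_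
    · rw [show (3 : ℕ) - 1 = 2 from rfl, hf52 x hx, hf22 x hx]
      field_simp <;> first | ring1 | tauto
    · have h := ((hasDerivAt_id' (x := c)).mul (hasDerivAt_id' (x := c))).const_mul
        (2 * (lam + 2) / lam)
      convert h using 1; (rfl; rfl; rfl)
      ring
  have hf63 : ∀ x : ℝ, 0 < x →
      f 6 3 x = lam⁻¹ * (4 * x + (lam + 2) * (4 * x * Real.log x + 4 * x)) := by
    intro c hc
    refine uniq_deriv hc (fun x hx => ?_) (hft 3 6 (by norm_num) (by norm_num) (by norm_num) c hc)
      (G := fun x => lam⁻¹ *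
        (2 * (x * x) + (lam + 2) * (2 * (x * x) * Real.log x + x * x))) ?_
    · rw [show (3 : ℕ) - 1 = 2 from rfl, hf62 x hx, hf22 x hx]
      field_simp <;> first | ring1 | tauto
    · have hxx := (hasDerivAt_id' (x := c)).mul (hasDerivAt_id' (x := c))
      have h := ((hxx.const_mul 2).add
        ((((hxx.const_mul 2).mul (Real.hasDerivAt_log hc.ne')).add hxx).const_mul
          (lam + 2))).const_mul lam⁻¹
      convert h using 1; (rfl; rfl; rfl)
      simp only [Pi.mul_apply]
      field_simp <;> first | ring1 | tauto
  -- level 4 : dividing by f 3 3 (= (lam+1)/lam, a constant)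
  have hf44 : ∀ x : ℝ, 0 < x → f 4 4 x = x⁻¹ := by
    intro c hc
    refine uniq_deriv hc (fun x hx => ?_) (hft 4 4 (by norm_num) le_rfl (by norm_num) c hc)
      (G := fun x => (lam + 1)⁻¹ + Real.log x + 2)
      (((Real.hasDerivAt_log hc.ne').const_add _).add_const 2)
    rw [show (4 : ℕ) - 1 = 3 from rfl, hf43 x hx, hf33 x hx]
    field_simp <;> first | ring1 | tauto
  have hf54 : ∀ x : ℝ, 0 < x → f 5 4 x = 4 * (lam + 2) / (lam + 1) := by
    intro c hc
    refine uniq_deriv hc (fun x hx => ?_) (hft 4 5 (by norm_num) (by norm_num) (by norm_num) c hc)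
      (G := fun x => 4 * (lam + 2) / (lam + 1) * x)
      (by simpa using (hasDerivAt_id' (x := c)).const_mul (4 * (lam + 2) / (lam + 1)))
    rw [show (4 : ℕ) - 1 = 3 from rfl, hf53 x hx, hf33 x hx]
    field_simp <;> first | ring1 | tauto
  have hf64 : ∀ x : ℝ, 0 < x →
      f 6 4 x = (lam + 1)⁻¹ * (4 + (lam + 2) * (4 * Real.log x + 8)) := by
    intro c hc
    refine uniq_deriv hc (fun x hx => ?_) (hft 4 6 (by norm_num) (by norm_num) (by norm_num) c hc)
      (G := fun x => (lam + 1)⁻¹ *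
        (4 * x + (lam + 2) * (4 * x * Real.log x + 4 * x))) ?_
    · rw [show (4 : ℕ) - 1 = 3 from rfl, hf63 x hx, hf33 x hx]
      field_simp <;> first | ring1 | tauto
    · have h := (((hasDerivAt_id' (x := c)).const_mul 4).add
        (((((hasDerivAt_id' (x := c)).const_mul 4).mul (Real.hasDerivAt_log hc.ne')).add
          ((hasDerivAt_id' (x := c)).const_mul 4)).const_mul (lam + 2))).const_mul (lam + 1)⁻¹
      convert h using 1; (rfl; rfl; rfl)
      simp only [mul_inv_cancel₀ hc.ne', mul_inv_cancel_right₀ hc.ne']; ring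
  -- level 5 : dividing by f 4 4 (= x⁻¹)
  have hf55 : ∀ x : ℝ, 0 < x → f 5 5 x = 4 * (lam + 2) / (lam + 1) := by
    intro c hc
    refine uniq_deriv hc (fun x hx => ?_) (hft 5 5 (by norm_num) le_rfl (by norm_num) c hc)
      (G := fun x => 4 * (lam + 2) / (lam + 1) * x)
      (by simpa using (hasDerivAt_id' (x := c)).const_mul (4 * (lam + 2) / (lam + 1)))
    rw [show (5 : ℕ) - 1 = 4 from rfl, hf54 x hx, hf44 x hx]
    field_simp <;> first | ring1 | tauto
  have hf65 : ∀ x : ℝ, 0 < x →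
      f 6 5 x = (lam + 1)⁻¹ * (4 + (lam + 2) * (4 * Real.log x + 12)) := by
    intro c hc
    refine uniq_deriv hc (fun x hx => ?_) (hft 5 6 (by norm_num) (by norm_num) (by norm_num) c hc)
      (G := fun x => (lam + 1)⁻¹ *
        (4 * x + (lam + 2) * (4 * x * Real.log x + 8 * x))) ?_
    · rw [show (5 : ℕ) - 1 = 4 from rfl, hf64 x hx, hf44 x hx]
      field_simp <;> first | ring1 | tauto
    · have h := (((hasDerivAt_id' (x := c)).const_mul 4).add
        (((((hasDerivAt_id' (x := c)).const_mul 4).mul (Real.hasDerivAt_log hc.ne')).add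
          ((hasDerivAt_id' (x := c)).const_mul 8)).const_mul (lam + 2))).const_mul (lam + 1)⁻¹
      convert h using 1; (rfl; rfl; rfl)
      simp only [mul_inv_cancel₀ hc.ne', mul_inv_cancel_right₀ hc.ne']; ring
  -- level 6 : dividing by f 5 5 (a constant)
  have hf66 : ∀ x : ℝ, 0 < x → f 6 6 x = x⁻¹ := by
    intro c hc
    refine uniq_deriv hc (fun x hx => ?_) (hft 6 6 (by norm_num) le_rfl le_rfl c hc)
      (G := fun x => (4 + 12 * (lam + 2)) / (4 * (lam + 2)) + Real.log x)
      ((Real.hasDerivAt_log hc.ne').const_add _)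
    rw [show (6 : ℕ) - 1 = 5 from rfl, hf65 x hx, hf55 x hx]
    field_simp <;> first | ring1 | tauto
  intro c hc
  refine ⟨hf11 c hc, ?_, hf33 c hc, ?_, hf55 c hc, ?_⟩
  · rw [hf22 c hc, one_div]
  · rw [hf44 c hc, one_div]
  · rw [hf66 c hc, one_div]
end

section
/- Define Ψ_1(c) = c, Ψ_2(c) = e^c, Ψ_3(c) = c e^c, Ψ_4(c) = e^{2c}, Ψ_5(c) = c e^{2c} on ℝ. Then the iterated divided derivatives satisfy f_{1,1}(c) = 1, f_{2,2}(c) = e^c, f_{3,3}(c) = 1, f_{4,4}(c) = 4e^c, f_{5,5}(c) = 1, and consequently all f_{l,l} are strictly positive on ℝ. -/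
/-- Iterated divided-derivative computations for the LINEXP model:
`Ψ_1 = c, Ψ_2 = e^c, Ψ_3 = c e^c, Ψ_4 = e^{2c}, Ψ_5 = c e^{2c}` on `ℝ`. -/
theorem stmt_15 (Ψ : ℕ → ℝ → ℝ)
    (hΨ1 : ∀ c : ℝ, Ψ 1 c = c)
    (hΨ2 : ∀ c : ℝ, Ψ 2 c = Real.exp c)
    (hΨ3 : ∀ c : ℝ, Ψ 3 c = c * Real.exp c)
    (hΨ4 : ∀ c : ℝ, Ψ 4 c = Real.exp (2 * c))
    (hΨ5 : ∀ c : ℝ, Ψ 5 c = c * Real.exp (2 * c))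
    (f : ℕ → ℕ → ℝ → ℝ)
    (hf1 : ∀ l, 1 ≤ l → l ≤ 5 → ∀ c : ℝ, HasDerivAt (Ψ l) (f l 1 c) c)
    (hft : ∀ t l, 2 ≤ t → t ≤ l → l ≤ 5 → ∀ c : ℝ,
      HasDerivAt (fun x => f l (t - 1) x / f (t - 1) (t - 1) x) (f l t c) c) :
    (∀ c : ℝ,
      f 1 1 c = 1 ∧ f 2 2 c = Real.exp c ∧ f 3 3 c = 1 ∧
      f 4 4 c = 4 * Real.exp c ∧ f 5 5 c = 1) ∧
    ∀ l, 1 ≤ l → l ≤ 5 → ∀ c : ℝ, 0 < f l l c := by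
  have e1 : Ψ 1 = fun c => c := funext hΨ1
  have e2 : Ψ 2 = fun c => Real.exp c := funext hΨ2
  have e3 : Ψ 3 = fun c => c * Real.exp c := funext hΨ3
  have e4 : Ψ 4 = fun c => Real.exp (2 * c) := funext hΨ4
  have e5 : Ψ 5 = fun c => c * Real.exp (2 * c) := funext hΨ5
  -- level 1 derivatives
  have h11 : ∀ c, f 1 1 c = 1 := fun c =>
    (hf1 1 le_rfl (by norm_num) c).unique (e1 ▸ hasDerivAt_id c)
  have h21 : ∀ c, f 2 1 c = Real.exp c := fun c =>
    (hf1 2 (by norm_num) (by norm_num) c).unique (e2 ▸ Real.hasDerivAt_exp c)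
  have h31 : ∀ c, f 3 1 c = (c + 1) * Real.exp c := by
    intro c
    have h : HasDerivAt (fun x : ℝ => x * Real.exp x) ((c + 1) * Real.exp c) c := by
      have := (hasDerivAt_id c).mul (Real.hasDerivAt_exp c)
      refine this.congr_deriv ?_ <;> (try simp only [id_eq]) <;> ring
    exact (hf1 3 (by norm_num) (by norm_num) c).unique (e3 ▸ h)
  have d2exp : ∀ c : ℝ, HasDerivAt (fun x : ℝ => Real.exp (2 * x)) (2 * Real.exp (2 * c)) c := by
    intro c
    have h2x : HasDerivAt (fun x : ℝ => 2 * x) 2 c := by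
      simpa using (hasDerivAt_id c).const_mul (2 : ℝ)
    have := h2x.exp
    convert this using 1 <;> (try simp only [id_eq]) <;> ring
  have h41 : ∀ c, f 4 1 c = 2 * Real.exp (2 * c) := fun c =>
    (hf1 4 (by norm_num) (by norm_num) c).unique (e4 ▸ d2exp c)
  have h51 : ∀ c, f 5 1 c = (1 + 2 * c) * Real.exp (2 * c) := by
    intro c
    have h : HasDerivAt (fun x : ℝ => x * Real.exp (2 * x)) ((1 + 2 * c) * Real.exp (2 * c)) c := by
      have := (hasDerivAt_id c).mul (d2exp c)
      refine this.congr_deriv ?_ <;> (try simp only [id_eq]) <;> ring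
    exact (hf1 5 (by norm_num) (by norm_num) c).unique (e5 ▸ h)
  -- level 2
  have h22 : ∀ c, f 2 2 c = Real.exp c := by
    intro c
    have hfun : (fun x => f 2 (2 - 1) x / f (2 - 1) (2 - 1) x) = fun x => Real.exp x := by
      funext x; norm_num [h21, h11]
    have h := hft 2 2 le_rfl le_rfl (by norm_num) c
    rw [hfun] at h
    exact h.unique (Real.hasDerivAt_exp c)
  have h32 : ∀ c, f 3 2 c = (c + 2) * Real.exp c := by
    intro c
    have hfun : (fun x => f 3 (2 - 1) x / f (2 - 1) (2 - 1) x) = fun x => (x + 1) * Real.exp x := by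
      funext x; norm_num [h31, h11]
    have h := hft 2 3 le_rfl (by norm_num) (by norm_num) c
    rw [hfun] at h
    refine h.unique ?_
    have := ((hasDerivAt_id c).add_const 1).mul (Real.hasDerivAt_exp c)
    refine this.congr_deriv ?_ <;> (try simp only [id_eq]) <;> ring
  have h42 : ∀ c, f 4 2 c = 4 * Real.exp (2 * c) := by
    intro c
    have hfun : (fun x => f 4 (2 - 1) x / f (2 - 1) (2 - 1) x) = fun x => 2 * Real.exp (2 * x) := by
      funext x; norm_num [h41, h11]
    have h := hft 2 4 le_rfl (by norm_num) (by norm_num) c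
    rw [hfun] at h
    refine h.unique ?_
    have := (d2exp c).const_mul (2 : ℝ)
    refine this.congr_deriv ?_ <;> (try simp only [id_eq]) <;> ring
  have h52 : ∀ c, f 5 2 c = (4 + 4 * c) * Real.exp (2 * c) := by
    intro c
    have hfun : (fun x => f 5 (2 - 1) x / f (2 - 1) (2 - 1) x)
        = fun x => (1 + 2 * x) * Real.exp (2 * x) := by
      funext x; norm_num [h51, h11]
    have h := hft 2 5 le_rfl (by norm_num) (by norm_num) c
    rw [hfun] at h
    refine h.unique ?_
    have h12 : HasDerivAt (fun x : ℝ => 1 + 2 * x) 2 c := by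
      simpa using ((hasDerivAt_id c).const_mul (2 : ℝ)).const_add (1 : ℝ)
    have := h12.mul (d2exp c)
    refine this.congr_deriv ?_ <;> (try simp only [id_eq]) <;> ring
  -- level 3
  have h33 : ∀ c, f 3 3 c = 1 := by
    intro c
    have hfun : (fun x => f 3 (3 - 1) x / f (3 - 1) (3 - 1) x) = fun x => x + 2 := by
      funext x
      show f 3 2 x / f 2 2 x = x + 2
      rw [h32, h22]
      field_simp
    have h := hft 3 3 (by norm_num) le_rfl (by norm_num) c
    rw [hfun] at h
    exact h.unique ((hasDerivAt_id c).add_const 2)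
  have h43 : ∀ c, f 4 3 c = 4 * Real.exp c := by
    intro c
    have hfun : (fun x => f 4 (3 - 1) x / f (3 - 1) (3 - 1) x) = fun x => 4 * Real.exp x := by
      funext x
      show f 4 2 x / f 2 2 x = 4 * Real.exp x
      rw [h42, h22, two_mul, Real.exp_add]
      field_simp
    have h := hft 3 4 (by norm_num) (by norm_num) (by norm_num) c
    rw [hfun] at h
    exact h.unique ((Real.hasDerivAt_exp c).const_mul 4)
  have h53 : ∀ c, f 5 3 c = (8 + 4 * c) * Real.exp c := by
    intro c
    have hfun : (fun x => f 5 (3 - 1) x / f (3 - 1) (3 - 1) x)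
        = fun x => (4 + 4 * x) * Real.exp x := by
      funext x
      show f 5 2 x / f 2 2 x = (4 + 4 * x) * Real.exp x
      rw [h52, h22, two_mul, Real.exp_add]
      field_simp
    have h := hft 3 5 (by norm_num) (by norm_num) (by norm_num) c
    rw [hfun] at h
    refine h.unique ?_
    have h4x : HasDerivAt (fun x : ℝ => 4 + 4 * x) 4 c := by
      simpa using ((hasDerivAt_id c).const_mul (4 : ℝ)).const_add (4 : ℝ)
    have := h4x.mul (Real.hasDerivAt_exp c)
    refine this.congr_deriv ?_ <;> (try simp only [id_eq]) <;> ring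
  -- level 4
  have h44 : ∀ c, f 4 4 c = 4 * Real.exp c := by
    intro c
    have hfun : (fun x => f 4 (4 - 1) x / f (4 - 1) (4 - 1) x) = fun x => 4 * Real.exp x := by
      funext x
      show f 4 3 x / f 3 3 x = 4 * Real.exp x
      rw [h43, h33, div_one]
    have h := hft 4 4 (by norm_num) le_rfl (by norm_num) c
    rw [hfun] at h
    exact h.unique ((Real.hasDerivAt_exp c).const_mul 4)
  have h54 : ∀ c, f 5 4 c = (12 + 4 * c) * Real.exp c := by
    intro c
    have hfun : (fun x => f 5 (4 - 1) x / f (4 - 1) (4 - 1) x)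
        = fun x => (8 + 4 * x) * Real.exp x := by
      funext x
      show f 5 3 x / f 3 3 x = (8 + 4 * x) * Real.exp x
      rw [h53, h33, div_one]
    have h := hft 4 5 (by norm_num) (by norm_num) (by norm_num) c
    rw [hfun] at h
    refine h.unique ?_
    have h4x : HasDerivAt (fun x : ℝ => 8 + 4 * x) 4 c := by
      simpa using ((hasDerivAt_id c).const_mul (4 : ℝ)).const_add (8 : ℝ)
    have := h4x.mul (Real.hasDerivAt_exp c)
    refine this.congr_deriv ?_ <;> (try simp only [id_eq]) <;> ring
  -- level 5
  have h55 : ∀ c, f 5 5 c = 1 := by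
    intro c
    have hfun : (fun x => f 5 (5 - 1) x / f (5 - 1) (5 - 1) x) = fun x => 3 + x := by
      funext x
      show f 5 4 x / f 4 4 x = 3 + x
      rw [h54, h44]
      have hx := Real.exp_ne_zero x
      field_simp
      ring
    have h := hft 5 5 (by norm_num) le_rfl (by norm_num) c
    rw [hfun] at h
    refine h.unique ?_
    simpa using (hasDerivAt_id c).const_add (3 : ℝ)
  refine ⟨fun c => ⟨h11 c, h22 c, h33 c, h44 c, h55 c⟩, ?_⟩
  intro l h1 h5 c
  interval_cases l <;>
    simp only [h11, h22, h33, h44, h55] <;> positivity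
end
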